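/- arXiv:math/0602663 — 4 statements merged into one kernel-verified Lean document; each statement's English description precedes it below -/
import Mathlib

section
/- Let f satisfy hypothesis (⋆) with parameters H, c, s, let a be a filter of order K ≥ 1 with K < H, and let u ≥ 1 be an integer. Then ∫_ℝ ξ^{2K} f(ξ) dξ < ∞ and N^{2K} ∫_ℝ |P_a(e^{−iuξ/N})|² f(ξ) dξ → u^{2K} (P_a^{(K)}(1)/K!)² ∫_ℝ ξ^{2K} f(ξ) dξ as N → ∞. (The left-hand integral equals the expected generalized quadratic variation E(V_{N,a^u}) of a centered Gaussian process with stationary increments and spectral density f.) -/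
open MeasureTheory Filter Complex

noncomputable section

/-- The polynomial `P_a(x) = ∑_{k=0}^l a_k x^k` associated to a filter. -/
def Pa (a : ℕ → ℝ) (l : ℕ) (x : ℂ) : ℂ :=
  ∑ k ∈ Finset.range (l + 1), (a k : ℂ) * x ^ k

/-- `a` is a filter of order `K ≥ 1` and length `l+1`. -/
def IsFilter (a : ℕ → ℝ) (l K : ℕ) : Prop :=
  1 ≤ K ∧ K ≤ l ∧
    (∀ r < K, ∑ k ∈ Finset.range (l + 1), a k * (k : ℝ) ^ r = 0) ∧
    ∑ k ∈ Finset.range (l + 1), a k * (k : ℝ) ^ K ≠ 0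

/-- Hypothesis (⋆) on the spectral density `f` with parameters `H, c, s`. -/
structure SpecHyp (f : ℝ → ℝ) (H c s : ℝ) : Prop where
  even : ∀ ξ : ℝ, f (-ξ) = f ξ
  nonneg : ∀ ξ : ℝ, 0 ≤ f ξ
  meas : Measurable f
  integrable : Integrable (fun ξ : ℝ => min 1 (ξ ^ 2) * f ξ)
  Hpos : 0 < H
  cpos : 0 < c
  spos : 0 < s
  bound : ∃ C₀ > (0 : ℝ), ∃ A > (0 : ℝ), ∀ ξ : ℝ, A ≤ |ξ| →
    |f ξ - c * |ξ| ^ (-2 * H - 1)| ≤ C₀ * |ξ| ^ (-2 * H - 1 - s)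

/-- `P_a^{(K)}(1) = ∑_{k=0}^l a_k k(k-1)⋯(k-K+1)`. -/
def derPaK (a : ℕ → ℝ) (l K : ℕ) : ℝ :=
  ∑ k ∈ Finset.range (l + 1), a k * (Nat.descFactorial k K : ℝ)

/- ### Auxiliary lemmas -/

lemma exp_taylor_bound (n : ℕ) (y : ℝ) :
    ‖Complex.exp (Complex.I * y) - ∑ r ∈ Finset.range n, (Complex.I * y) ^ r / (Nat.factorial r : ℂ)‖
      ≤ |y| ^ n := by
  induction n generalizing y with
  | zero =>
    simp [Complex.norm_exp]
  | succ n ih =>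
    set g : ℝ → ℂ := fun t =>
      Complex.exp (Complex.I * t) - ∑ r ∈ Finset.range (n+1), (Complex.I * t) ^ r / (Nat.factorial r : ℂ) with hg
    have hderiv : ∀ t : ℝ, HasDerivAt g
        (Complex.I * (Complex.exp (Complex.I * t)
          - ∑ r ∈ Finset.range n, (Complex.I * t) ^ r / (Nat.factorial r : ℂ))) t := by
      intro t
      have h1 : HasDerivAt (fun t : ℝ => Complex.exp (Complex.I * t)) (Complex.I * Complex.exp (Complex.I * t)) t := by
        have := ((Complex.hasDerivAt_exp (Complex.I * t)).comp (t : ℂ)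
          ((hasDerivAt_id (t : ℂ)).const_mul Complex.I)).comp_ofReal
        simpa [mul_comm] using this
      have h2 : ∀ r : ℕ, HasDerivAt (fun t : ℝ => (Complex.I * t) ^ r / (Nat.factorial r : ℂ))
          ((r : ℂ) * (Complex.I * t) ^ (r - 1) * Complex.I / (Nat.factorial r : ℂ)) t := by
        intro r
        have := ((((hasDerivAt_id (t : ℂ)).const_mul Complex.I).pow r).div_const
          ((Nat.factorial r : ℂ))).comp_ofReal
        simpa [mul_comm, mul_assoc, mul_one] using this
      have hsum : HasDerivAt (fun t : ℝ => ∑ r ∈ Finset.range (n+1), (Complex.I * t) ^ r / (Nat.factorial r : ℂ))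
          (∑ r ∈ Finset.range (n+1), (r : ℂ) * (Complex.I * t) ^ (r - 1) * Complex.I / (Nat.factorial r : ℂ)) t :=
        HasDerivAt.fun_sum fun r _ => h2 r
      have hsumeq : (∑ r ∈ Finset.range (n+1), (r : ℂ) * (Complex.I * t) ^ (r - 1) * Complex.I / (Nat.factorial r : ℂ))
          = Complex.I * ∑ r ∈ Finset.range n, (Complex.I * t) ^ r / (Nat.factorial r : ℂ) := by
        rw [Finset.sum_range_succ', Finset.mul_sum]
        have hterm : ∀ i : ℕ, (((i+1 : ℕ) : ℂ)) * (Complex.I * t) ^ ((i+1) - 1) * Complex.I / (Nat.factorial (i+1) : ℂ)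
            = Complex.I * ((Complex.I * t) ^ i / (Nat.factorial i : ℂ)) := by
          intro i
          have h0 : ((Nat.factorial i : ℂ)) ≠ 0 := Nat.cast_ne_zero.mpr (Nat.factorial_ne_zero i)
          have h1' : ((i : ℂ) + 1) ≠ 0 := by
            exact_mod_cast (Nat.cast_ne_zero (R := ℂ)).mpr (Nat.succ_ne_zero i)
          rw [Nat.factorial_succ]
          push_cast
          field_simp
        simp only [hterm, Nat.cast_zero, zero_mul, zero_div, add_zero]
      have hd := h1.sub hsum
      rw [hsumeq] at hd
      rw [mul_sub]; exact hd
    have hbound : ∀ t ∈ Set.uIcc (0:ℝ) y,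
        ‖Complex.I * (Complex.exp (Complex.I * t)
          - ∑ r ∈ Finset.range n, (Complex.I * t) ^ r / (Nat.factorial r : ℂ))‖ ≤ |y| ^ n := by
      intro t ht
      rw [norm_mul, Complex.norm_I, one_mul]
      refine (ih t).trans (pow_le_pow_left₀ (abs_nonneg t) ?_ n)
      rcases Set.mem_uIcc.mp ht with ⟨h1, h2⟩ | ⟨h1, h2⟩
      · rw [_root_.abs_of_nonneg h1]; exact h2.trans (le_abs_self y)
      · rw [_root_.abs_of_nonpos h2]; exact (neg_le_neg h1).trans (neg_le_abs y)
    have hg0 : g 0 = 0 := by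
      simp only [hg, Complex.ofReal_zero, mul_zero, Complex.exp_zero]
      rw [Finset.sum_range_succ']
      simp
    have := (convex_uIcc (0:ℝ) y).norm_image_sub_le_of_norm_hasDerivWithin_le
      (f := g) (f' := fun t => Complex.I * (Complex.exp (Complex.I * t)
          - ∑ r ∈ Finset.range n, (Complex.I * t) ^ r / (Nat.factorial r : ℂ)))
      (fun t _ => (hderiv t).hasDerivWithinAt) hbound
      Set.left_mem_uIcc Set.right_mem_uIcc
    rw [hg0, sub_zero] at this
    calc ‖g y‖ ≤ |y| ^ n * ‖y - 0‖ := this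
    _ = |y| ^ (n+1) := by rw [sub_zero, Real.norm_eq_abs, pow_succ]

lemma Pa_expand (a : ℕ → ℝ) (l : ℕ) (n : ℕ) (x : ℝ) :
    Pa a l (Complex.exp (-Complex.I * x))
      = (∑ k ∈ Finset.range (l + 1), (a k : ℂ) *
          (Complex.exp (Complex.I * ((-((k : ℝ) * x) : ℝ) : ℂ)) -
            ∑ r ∈ Finset.range n, (Complex.I * ((-((k : ℝ) * x) : ℝ) : ℂ)) ^ r / (Nat.factorial r : ℂ)))
        + ∑ r ∈ Finset.range n, (-Complex.I * x) ^ r / (Nat.factorial r : ℂ) *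
            ((∑ k ∈ Finset.range (l + 1), a k * (k : ℝ) ^ r : ℝ) : ℂ) := by
  have swap : ∑ k ∈ Finset.range (l+1), (a k : ℂ) *
        ∑ r ∈ Finset.range n, (Complex.I * ((-((k : ℝ) * x) : ℝ) : ℂ)) ^ r / (Nat.factorial r : ℂ)
      = ∑ r ∈ Finset.range n, (-Complex.I * x) ^ r / (Nat.factorial r : ℂ) *
            ((∑ k ∈ Finset.range (l + 1), a k * (k : ℝ) ^ r : ℝ) : ℂ) := by
    simp only [Finset.mul_sum]
    rw [Finset.sum_comm]
    refine Finset.sum_congr rfl fun r _ => ?_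
    push_cast
    rw [Finset.mul_sum]
    refine Finset.sum_congr rfl fun k _ => ?_
    have h : Complex.I * -((k : ℂ) * (x : ℂ)) = (-Complex.I * x) * k := by ring
    rw [h, mul_pow]
    ring
  rw [← swap, ← Finset.sum_add_distrib]
  unfold Pa
  refine Finset.sum_congr rfl fun k _ => ?_
  have hexp : Complex.exp (-Complex.I * x) ^ k = Complex.exp (Complex.I * ((-((k : ℝ) * x) : ℝ) : ℂ)) := by
    rw [← Complex.exp_nat_mul]
    congr 1
    push_cast
    ring
  rw [hexp]
  ring

lemma Pa_norm_bound (a : ℕ → ℝ) (l n : ℕ)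
    (hvan : ∀ r < n, ∑ k ∈ Finset.range (l + 1), a k * (k : ℝ) ^ r = 0) (x : ℝ) :
    ‖Pa a l (Complex.exp (-Complex.I * x))‖
      ≤ (∑ k ∈ Finset.range (l+1), |a k| * (k:ℝ)^n) * |x| ^ n := by
  rw [Pa_expand a l n x]
  have h2 : (∑ r ∈ Finset.range n, (-Complex.I * x) ^ r / (Nat.factorial r : ℂ) *
      ((∑ k ∈ Finset.range (l + 1), a k * (k : ℝ) ^ r : ℝ) : ℂ)) = 0 :=
    Finset.sum_eq_zero fun r hr => by rw [hvan r (Finset.mem_range.mp hr)]; simp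
  rw [h2, add_zero]
  refine (norm_sum_le _ _).trans ?_
  rw [Finset.sum_mul]
  refine Finset.sum_le_sum fun k _ => ?_
  rw [norm_mul, Complex.norm_real]
  have := exp_taylor_bound n (-((k : ℝ) * x))
  refine (mul_le_mul_of_nonneg_left this (abs_nonneg _)).trans ?_
  rw [abs_neg, abs_mul, Nat.abs_cast, mul_pow, mul_assoc]

lemma Pa_norm_bound2 (a : ℕ → ℝ) (l K : ℕ)
    (hvan : ∀ r < K, ∑ k ∈ Finset.range (l + 1), a k * (k : ℝ) ^ r = 0) (x : ℝ) :
    ‖Pa a l (Complex.exp (-Complex.I * x)) - (-Complex.I * x) ^ K / (Nat.factorial K : ℂ) *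
        ((∑ k ∈ Finset.range (l + 1), a k * (k : ℝ) ^ K : ℝ) : ℂ)‖
      ≤ (∑ k ∈ Finset.range (l+1), |a k| * (k:ℝ)^(K+1)) * |x| ^ (K+1) := by
  rw [Pa_expand a l (K+1) x]
  have hsplit : (∑ r ∈ Finset.range (K+1), (-Complex.I * x) ^ r / (Nat.factorial r : ℂ) *
      ((∑ k ∈ Finset.range (l + 1), a k * (k : ℝ) ^ r : ℝ) : ℂ))
      = (∑ r ∈ Finset.range K, (-Complex.I * x) ^ r / (Nat.factorial r : ℂ) *
      ((∑ k ∈ Finset.range (l + 1), a k * (k : ℝ) ^ r : ℝ) : ℂ))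
      + (-Complex.I * x) ^ K / (Nat.factorial K : ℂ) *
      ((∑ k ∈ Finset.range (l + 1), a k * (k : ℝ) ^ K : ℝ) : ℂ) := Finset.sum_range_succ _ _
  rw [hsplit]
  have h2 : (∑ r ∈ Finset.range K, (-Complex.I * x) ^ r / (Nat.factorial r : ℂ) *
      ((∑ k ∈ Finset.range (l + 1), a k * (k : ℝ) ^ r : ℝ) : ℂ)) = 0 :=
    Finset.sum_eq_zero fun r hr => by rw [hvan r (Finset.mem_range.mp hr)]; simp
  rw [h2, zero_add, add_sub_cancel_right]
  refine (norm_sum_le _ _).trans ?_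
  rw [Finset.sum_mul]
  refine Finset.sum_le_sum fun k _ => ?_
  rw [norm_mul, Complex.norm_real]
  have := exp_taylor_bound (K+1) (-((k : ℝ) * x))
  refine (mul_le_mul_of_nonneg_left this (abs_nonneg _)).trans ?_
  rw [abs_neg, abs_mul, Nat.abs_cast, mul_pow, mul_assoc]

lemma derPaK_eq (a : ℕ → ℝ) (l K : ℕ)
    (hvan : ∀ r < K, ∑ k ∈ Finset.range (l + 1), a k * (k : ℝ) ^ r = 0) :
    derPaK a l K = ∑ k ∈ Finset.range (l+1), a k * (k:ℝ)^K := by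
  unfold derPaK
  have hdeg : (descPochhammer ℝ K).natDegree = K := descPochhammer_natDegree ℝ K
  have h1 : ∀ k : ℕ, ((Nat.descFactorial k K : ℝ))
      = ∑ j ∈ Finset.range (K+1), (descPochhammer ℝ K).coeff j * (k:ℝ)^j := by
    intro k
    rw [← descPochhammer_eval_eq_descFactorial ℝ k K]
    conv_lhs => rw [Polynomial.eval_eq_sum_range, hdeg]
  simp only [h1, Finset.mul_sum]
  rw [Finset.sum_comm]
  have h3 : ∀ j, (∑ k ∈ Finset.range (l+1), a k * ((descPochhammer ℝ K).coeff j * (k:ℝ)^j))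
      = (descPochhammer ℝ K).coeff j * ∑ k ∈ Finset.range (l+1), a k * (k:ℝ)^j := by
    intro j
    rw [Finset.mul_sum]
    exact Finset.sum_congr rfl fun k _ => by ring
  simp only [h3]
  rw [Finset.sum_range_succ]
  have hz : ∀ j ∈ Finset.range K, (descPochhammer ℝ K).coeff j *
      (∑ k ∈ Finset.range (l+1), a k * (k:ℝ)^j) = 0 := fun j hj => by
    rw [hvan j (Finset.mem_range.mp hj), mul_zero]
  rw [Finset.sum_eq_zero hz, zero_add]
  have hcoeffK : (descPochhammer ℝ K).coeff K = 1 := by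
    have := (monic_descPochhammer ℝ K).coeff_natDegree
    rwa [hdeg] at this
  rw [hcoeffK, one_mul]

lemma integrable_pow_mul (f : ℝ → ℝ) (H c s : ℝ) (hf : SpecHyp f H c s)
    (K : ℕ) (hK : 1 ≤ K) (hKH : (K : ℝ) < H) :
    Integrable (fun ξ : ℝ => ξ ^ (2 * K) * f ξ) := by
  obtain ⟨C₀, hC₀, A, hA, hbd⟩ := hf.bound
  set B : ℝ := max 1 A with hB
  have hB1 : (1:ℝ) ≤ B := le_max_left _ _
  have hB0 : (0:ℝ) < B := lt_of_lt_of_le one_pos hB1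
  have hmeas : AEStronglyMeasurable (fun ξ : ℝ => ξ ^ (2 * K) * f ξ) volume :=
    ((measurable_id.pow_const (2*K)).mul hf.meas).aestronglyMeasurable
  have htail : ∀ ξ : ℝ, B ≤ |ξ| → ξ ^ (2*K) * f ξ ≤ (c + C₀) * |ξ| ^ ((2*K : ℝ) - 2*H - 1) := by
    intro ξ hξ
    have hξ1 : (1:ℝ) ≤ |ξ| := le_trans hB1 hξ
    have hξ0 : (0:ℝ) < |ξ| := lt_of_lt_of_le one_pos hξ1
    have h1 : f ξ ≤ c * |ξ| ^ (-2*H - 1) + C₀ * |ξ| ^ (-2*H - 1 - s) := by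
      have := hbd ξ (le_trans (le_max_right 1 A) hξ)
      have := abs_le.mp this
      linarith [this.2]
    have h2 : |ξ| ^ (-2*H - 1 - s) ≤ |ξ| ^ (-2*H - 1) :=
      Real.rpow_le_rpow_of_exponent_le hξ1 (by linarith [hf.spos])
    have h3 : f ξ ≤ (c + C₀) * |ξ| ^ (-2*H - 1) := by
      have := mul_le_mul_of_nonneg_left h2 hC₀.le
      nlinarith [hf.cpos]
    have h4 : ξ ^ (2*K) = |ξ| ^ ((2*K : ℕ) : ℝ) := by
      rw [Real.rpow_natCast, (even_two_mul K).pow_abs]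
    have h5 : ξ ^ (2*K) * f ξ ≤ |ξ| ^ ((2*K : ℕ) : ℝ) * ((c + C₀) * |ξ| ^ (-2*H - 1)) := by
      rw [← h4]
      exact mul_le_mul_of_nonneg_left h3 (h4 ▸ (even_two_mul K).pow_nonneg ξ)
    refine h5.trans (le_of_eq ?_)
    rw [mul_comm, mul_assoc, ← Real.rpow_add hξ0]
    push_cast
    ring_nf
  have hexp_lt : (2*(K:ℝ)) - 2*H - 1 < -1 := by linarith
  have hIoi : IntegrableOn (fun ξ : ℝ => ξ ^ (2*K) * f ξ) (Set.Ioi B) := by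
    have hIoi_rpow : IntegrableOn (fun ξ : ℝ => ξ ^ ((2*K : ℝ) - 2*H - 1)) (Set.Ioi B) :=
      integrableOn_Ioi_rpow_of_lt hexp_lt hB0
    refine Integrable.mono' (hIoi_rpow.const_mul (c + C₀)) hmeas.restrict ?_
    rw [ae_restrict_iff' measurableSet_Ioi]
    refine ae_of_all _ fun ξ hξ => ?_
    have hξB : B ≤ |ξ| := by
      rw [abs_of_pos (lt_trans hB0 hξ)]; exact (le_of_lt hξ)
    have h6 := htail ξ hξB
    rw [abs_of_pos (lt_trans hB0 hξ)] at h6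
    rw [Real.norm_eq_abs, _root_.abs_of_nonneg (mul_nonneg ((even_two_mul K).pow_nonneg ξ) (hf.nonneg ξ))]
    exact_mod_cast h6
  have hg_even : ∀ ξ : ℝ, (-ξ) ^ (2*K) * f (-ξ) = ξ ^ (2*K) * f ξ := fun ξ => by
    rw [hf.even, (even_two_mul K).neg_pow]
  have hIio : IntegrableOn (fun ξ : ℝ => ξ ^ (2*K) * f ξ) (Set.Iio (-B)) := by
    rw [← (Measure.measurePreserving_neg (volume : Measure ℝ)).integrableOn_comp_preimage
        (Homeomorph.neg ℝ).measurableEmbedding]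
    have hpre : (Neg.neg ⁻¹' Set.Iio (-B) : Set ℝ) = Set.Ioi B := by
      ext x; simp
    have hcong : ((fun ξ : ℝ => ξ ^ (2*K) * f ξ) ∘ Neg.neg) = fun ξ : ℝ => ξ ^ (2*K) * f ξ :=
      funext hg_even
    rw [hpre, hcong]
    exact hIoi
  have hIcc : IntegrableOn (fun ξ : ℝ => ξ ^ (2*K) * f ξ) (Set.Icc (-B) B) := by
    refine Integrable.mono' ((hf.integrable.const_mul (B^(2*K))).integrableOn) hmeas.restrict ?_
    rw [ae_restrict_iff' measurableSet_Icc]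
    refine ae_of_all _ fun ξ hξ => ?_
    have hξB : |ξ| ≤ B := abs_le.mpr ⟨hξ.1, hξ.2⟩
    rw [Real.norm_eq_abs, _root_.abs_of_nonneg (mul_nonneg ((even_two_mul K).pow_nonneg ξ) (hf.nonneg ξ))]
    rcases le_or_gt (|ξ|) 1 with hle | hlt
    · have hmin : min 1 (ξ^2) = ξ^2 := min_eq_right (by nlinarith [_root_.sq_abs ξ, abs_nonneg ξ])
      rw [hmin]
      have h7 : ξ ^ (2*K) ≤ ξ^2 := by
        rw [pow_mul]
        calc (ξ^2)^K ≤ (ξ^2)^1 := pow_le_pow_of_le_one (sq_nonneg ξ) (by nlinarith [_root_.sq_abs ξ, abs_nonneg ξ]) hK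
        _ = ξ^2 := pow_one _
      have h8 : (1:ℝ) ≤ B^(2*K) := one_le_pow₀ hB1
      calc ξ^(2*K) * f ξ ≤ ξ^2 * f ξ := mul_le_mul_of_nonneg_right h7 (hf.nonneg ξ)
      _ ≤ B^(2*K) * (ξ^2 * f ξ) :=
        le_mul_of_one_le_left (mul_nonneg (sq_nonneg ξ) (hf.nonneg ξ)) h8
    · have hmin : min 1 (ξ^2) = 1 := min_eq_left (by nlinarith [_root_.sq_abs ξ])
      rw [hmin]
      have h7 : ξ ^ (2*K) ≤ B^(2*K) := by
        rw [← (even_two_mul K).pow_abs]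
        exact pow_le_pow_left₀ (abs_nonneg ξ) hξB _
      calc ξ^(2*K) * f ξ ≤ B^(2*K) * f ξ := mul_le_mul_of_nonneg_right h7 (hf.nonneg ξ)
      _ = B^(2*K) * (1 * f ξ) := by ring
  have hcover : Set.Iio (-B) ∪ Set.Icc (-B) B ∪ Set.Ioi B = Set.univ := by
    ext x
    simp only [Set.mem_union, Set.mem_Iio, Set.mem_Icc, Set.mem_Ioi, Set.mem_univ, iff_true]
    rcases lt_trichotomy x (-B) with h | h | h
    · exact Or.inl (Or.inl h)
    · exact Or.inl (Or.inr ⟨le_of_eq h.symm, by linarith⟩)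
    · rcases le_or_gt x B with h' | h'
      · exact Or.inl (Or.inr ⟨le_of_lt h, h'⟩)
      · exact Or.inr h'
  rw [← integrableOn_univ, ← hcover]
  exact (hIio.union hIcc).union hIoi

theorem statement0 (f : ℝ → ℝ) (H c s : ℝ) (hf : SpecHyp f H c s)
    (a : ℕ → ℝ) (l K : ℕ) (ha : IsFilter a l K) (hKH : (K : ℝ) < H)
    (u : ℕ) (hu : 1 ≤ u) :
    Integrable (fun ξ : ℝ => ξ ^ (2 * K) * f ξ) ∧
    Tendsto
      (fun N : ℕ => (N : ℝ) ^ (2 * K) *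
        ∫ ξ : ℝ, ‖Pa a l (Complex.exp (-Complex.I * u * ξ / N))‖ ^ 2 * f ξ)
      atTop
      (nhds ((u : ℝ) ^ (2 * K) * (derPaK a l K / (Nat.factorial K : ℝ)) ^ 2 *
        ∫ ξ : ℝ, ξ ^ (2 * K) * f ξ)) := by
  obtain ⟨hK1, hKl, hvan, hnz⟩ := ha
  have hint : Integrable (fun ξ : ℝ => ξ ^ (2 * K) * f ξ) :=
    integrable_pow_mul f H c s hf K hK1 hKH
  refine ⟨hint, ?_⟩
  -- notation
  set m : ℝ := ∑ k ∈ Finset.range (l+1), a k * (k:ℝ)^K with hm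
  have hder : derPaK a l K = m := derPaK_eq a l K hvan
  set D : ℝ := m / (Nat.factorial K : ℝ) with hD
  set C₁ : ℝ := ∑ k ∈ Finset.range (l+1), |a k| * (k:ℝ)^K with hC₁
  set C₂ : ℝ := ∑ k ∈ Finset.range (l+1), |a k| * (k:ℝ)^(K+1) with hC₂
  have hC₁0 : 0 ≤ C₁ := Finset.sum_nonneg fun k _ => mul_nonneg (abs_nonneg _) (pow_nonneg (Nat.cast_nonneg k) _)
  set C₃ : ℝ := C₂ * (C₁ + |D|) with hC₃
  -- the key squared bounds
  have hKfac : (0:ℝ) < (Nat.factorial K : ℝ) := by exact_mod_cast Nat.factorial_pos K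
  have hnormD : ∀ y : ℝ, ‖(-Complex.I * (y:ℂ)) ^ K / (Nat.factorial K : ℂ) * ((m : ℝ) : ℂ)‖ = |y|^K * |D| := by
    intro y
    simp only [norm_mul, norm_div, norm_pow, norm_neg, Complex.norm_I, one_mul,
      Complex.norm_real, Complex.norm_natCast, Real.norm_eq_abs, hD, abs_div,
      _root_.abs_of_pos hKfac]
    ring
  have hsq : ∀ y : ℝ, ‖Pa a l (Complex.exp (-Complex.I * (y:ℂ)))‖^2 ≤ C₁^2 * y^(2*K) := by
    intro y
    have h1 := Pa_norm_bound a l K hvan y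
    have h2 : ‖Pa a l (Complex.exp (-Complex.I * (y:ℂ)))‖^2 ≤ (C₁ * |y|^K)^2 :=
      pow_le_pow_left₀ (norm_nonneg _) h1 2
    refine h2.trans (le_of_eq ?_)
    rw [mul_pow, ← pow_mul, mul_comm K 2, (even_two_mul K).pow_abs]
  have hsqdiff : ∀ y : ℝ, |‖Pa a l (Complex.exp (-Complex.I * (y:ℂ)))‖^2 - y^(2*K) * D^2|
      ≤ C₃ * |y|^(2*K+1) := by
    intro y
    set A' : ℝ := ‖Pa a l (Complex.exp (-Complex.I * (y:ℂ)))‖ with hA'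
    set B' : ℝ := |y|^K * |D| with hB'
    have hA'0 : 0 ≤ A' := norm_nonneg _
    have hB'0 : 0 ≤ B' := mul_nonneg (pow_nonneg (abs_nonneg y) K) (abs_nonneg D)
    have hAB : |A' - B'| ≤ C₂ * |y|^(K+1) := by
      have := Pa_norm_bound2 a l K hvan y
      refine le_trans ?_ this
      rw [hB', ← hnormD y]
      exact abs_norm_sub_norm_le _ _
    have hsum : A' + B' ≤ (C₁ + |D|) * |y|^K := by
      have h1 := Pa_norm_bound a l K hvan y
      rw [hA', hB']
      nlinarith [pow_nonneg (abs_nonneg y) K, abs_nonneg D]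
    have hBsq : B'^2 = y^(2*K) * D^2 := by
      rw [hB', mul_pow, ← pow_mul, mul_comm K 2, (even_two_mul K).pow_abs, _root_.sq_abs]
    rw [← hBsq]
    have heq : A'^2 - B'^2 = (A' - B') * (A' + B') := by ring
    rw [heq, abs_mul, _root_.abs_of_nonneg (by linarith : (0:ℝ) ≤ A' + B')]
    calc |A' - B'| * (A' + B') ≤ (C₂ * |y|^(K+1)) * ((C₁ + |D|) * |y|^K) := by
          apply mul_le_mul hAB hsum (by linarith) (by positivity)
    _ = C₃ * |y|^(2*K+1) := by rw [hC₃]; ring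
  -- the dominated convergence setup
  have hcast : ∀ (N : ℕ) (ξ : ℝ),
      (-Complex.I * (u:ℂ) * (ξ:ℂ) / (N:ℂ)) = -Complex.I * ((((u:ℝ) * ξ / (N:ℝ)) : ℝ) : ℂ) := by
    intro N ξ
    push_cast
    ring
  set F : ℕ → ℝ → ℝ := fun N ξ => (N:ℝ)^(2*K) *
    (‖Pa a l (Complex.exp (-Complex.I * ((((u:ℝ) * ξ / (N:ℝ)) : ℝ) : ℂ)))‖^2 * f ξ) with hF
  have hPacont : Continuous (Pa a l) := by
    unfold Pa
    exact continuous_finset_sum _ fun k _ => continuous_const.mul (continuous_pow k)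
  have hFmeas : ∀ N : ℕ, AEStronglyMeasurable (F N) volume := by
    intro N
    have hcont : Continuous fun ξ : ℝ =>
        ‖Pa a l (Complex.exp (-Complex.I * ((((u:ℝ) * ξ / (N:ℝ)) : ℝ) : ℂ)))‖^2 := by
      apply Continuous.pow
      apply Continuous.norm
      apply hPacont.comp
      apply Complex.continuous_exp.comp
      apply Continuous.mul continuous_const
      exact Complex.continuous_ofReal.comp (by fun_prop)
    exact (measurable_const.mul (hcont.measurable.mul hf.meas)).aestronglyMeasurable
  set bound : ℝ → ℝ := fun ξ => (C₁^2 * (u:ℝ)^(2*K)) * (ξ^(2*K) * f ξ) with hbound_def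
  have hbound_int : Integrable bound := hint.const_mul _
  have hbound_nonneg : ∀ ξ, 0 ≤ bound ξ := by
    intro ξ
    apply mul_nonneg (by positivity)
    exact mul_nonneg ((even_two_mul K).pow_nonneg ξ) (hf.nonneg ξ)
  have hFnonneg : ∀ N ξ, 0 ≤ F N ξ := by
    intro N ξ
    exact mul_nonneg (by positivity) (mul_nonneg (by positivity) (hf.nonneg ξ))
  have h_bound : ∀ N : ℕ, ∀ᵐ ξ : ℝ, ‖F N ξ‖ ≤ bound ξ := by
    intro N
    refine ae_of_all _ fun ξ => ?_
    rw [Real.norm_eq_abs, _root_.abs_of_nonneg (hFnonneg N ξ)]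
    rcases Nat.eq_zero_or_pos N with hN | hN
    · subst hN
      simp only [hF, Nat.cast_zero]
      rw [zero_pow (by omega), zero_mul]
      exact hbound_nonneg ξ
    · have hN0 : (N:ℝ) ≠ 0 := by positivity
      have h1 : F N ξ ≤ (N:ℝ)^(2*K) * ((C₁^2 * ((u:ℝ) * ξ / (N:ℝ))^(2*K)) * f ξ) := by
        apply mul_le_mul_of_nonneg_left _ (by positivity)
        exact mul_le_mul_of_nonneg_right (hsq _) (hf.nonneg ξ)
      refine h1.trans (le_of_eq ?_)
      have h2 : (N:ℝ)^(2*K) * ((u:ℝ) * ξ / (N:ℝ))^(2*K) = (u:ℝ)^(2*K) * ξ^(2*K) := by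
        rw [← mul_pow, mul_div_cancel₀ _ hN0, mul_pow]
      calc (N:ℝ)^(2*K) * ((C₁^2 * ((u:ℝ) * ξ / (N:ℝ))^(2*K)) * f ξ)
          = C₁^2 * ((N:ℝ)^(2*K) * ((u:ℝ) * ξ / (N:ℝ))^(2*K)) * f ξ := by ring
      _ = bound ξ := by rw [h2, hbound_def]; ring
  have h_lim : ∀ᵐ ξ : ℝ, Tendsto (fun N => F N ξ) atTop
      (nhds (((u:ℝ)^(2*K) * D^2) * (ξ^(2*K) * f ξ))) := by
    refine ae_of_all _ fun ξ => ?_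
    set L : ℝ := ((u:ℝ)^(2*K) * D^2) * (ξ^(2*K) * f ξ) with hL
    have key : ∀ N : ℕ, 1 ≤ N → |F N ξ - L| ≤ (C₃ * ((u:ℝ)*|ξ|)^(2*K+1) * f ξ) / N := by
      intro N hN
      have hN0 : (0:ℝ) < N := by exact_mod_cast hN
      set x : ℝ := (u:ℝ) * ξ / (N:ℝ) with hx
      have h2 : (N:ℝ)^(2*K) * x^(2*K) = (u:ℝ)^(2*K) * ξ^(2*K) := by
        rw [hx, ← mul_pow, mul_div_cancel₀ _ hN0.ne', mul_pow]
      have hFL : F N ξ - L = (N:ℝ)^(2*K) * f ξ *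
          (‖Pa a l (Complex.exp (-Complex.I * ((x : ℝ) : ℂ)))‖^2 - x^(2*K) * D^2) := by
        rw [hF, hL]
        have : (u:ℝ)^(2*K) * D^2 * (ξ^(2*K) * f ξ)
            = (N:ℝ)^(2*K) * f ξ * (x^(2*K) * D^2) := by
          linear_combination (D^2 * f ξ) * h2.symm
        rw [this]
        ring
      rw [hFL, abs_mul, _root_.abs_of_nonneg (mul_nonneg (by positivity) (hf.nonneg ξ))]
      have h3 := hsqdiff x
      have h4 : (N:ℝ)^(2*K) * f ξ * (C₃ * |x|^(2*K+1))
          = (C₃ * ((u:ℝ)*|ξ|)^(2*K+1) * f ξ) / N := by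
        have hxabs : |x| = (u:ℝ) * |ξ| / N := by
          rw [hx, abs_div, abs_mul, Nat.abs_cast, Nat.abs_cast]
        rw [hxabs, div_pow, mul_pow]
        field_simp
        ring
      calc (N:ℝ)^(2*K) * f ξ * |‖Pa a l (Complex.exp (-Complex.I * ((x : ℝ) : ℂ)))‖^2 - x^(2*K) * D^2|
          ≤ (N:ℝ)^(2*K) * f ξ * (C₃ * |x|^(2*K+1)) :=
            mul_le_mul_of_nonneg_left h3 (mul_nonneg (by positivity) (hf.nonneg ξ))
      _ = _ := h4
    rw [tendsto_iff_dist_tendsto_zero]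
    have hzero : Tendsto (fun N : ℕ => (C₃ * ((u:ℝ)*|ξ|)^(2*K+1) * f ξ) / N) atTop (nhds 0) :=
      tendsto_const_div_atTop_nhds_zero_nat _
    refine squeeze_zero' (Eventually.of_forall fun N => dist_nonneg) ?_ hzero
    filter_upwards [eventually_ge_atTop 1] with N hN
    rw [Real.dist_eq]
    exact key N hN
  have hDCT := tendsto_integral_of_dominated_convergence bound hFmeas hbound_int h_bound h_lim
  have hlim_int : (∫ ξ : ℝ, ((u:ℝ)^(2*K) * D^2) * (ξ^(2*K) * f ξ)) =
      ((u:ℝ)^(2*K) * D^2) * ∫ ξ : ℝ, ξ^(2*K) * f ξ := integral_const_mul _ _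
  have heqN : ∀ N : ℕ, (∫ ξ : ℝ, F N ξ) = (N:ℝ)^(2*K) *
      ∫ ξ : ℝ, ‖Pa a l (Complex.exp (-Complex.I * u * ξ / N))‖^2 * f ξ := by
    intro N
    simp only [hcast]
    exact integral_const_mul _ _
  rw [hder, ← hD, ← hlim_int]
  exact hDCT.congr heqN
end
end

section
/- Let a be a filter of order K ≥ 1 and let u ≥ 1 be an integer. Then there is a constant C > 0 such that for all ξ ∈ ℝ, the function h_a^{u,u}(ξ) = |P_a(e^{−iuξ})|² satisfies |h_a^{u,u}(ξ)| ≤ C min(1, ξ^{2K}) and |(d/dξ) h_a^{u,u}(ξ)| ≤ C min(1, |ξ|^{2K−1}). -/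
open MeasureTheory Filter Complex

noncomputable section

/-- `h_a^{u,u}(ξ) = |P_a(e^{-iuξ})|²`, a real-valued function. -/
def haUU (a : ℕ → ℝ) (l u : ℕ) (ξ : ℝ) : ℝ :=
  ‖Pa a l (Complex.exp (-Complex.I * u * ξ))‖ ^ 2

theorem myNormSqDeriv (f : ℝ → ℂ) (F : ℂ) (x : ℝ) (hf : HasDerivAt f F x) :
    HasDerivAt (fun t => Complex.normSq (f t)) (2 * ((starRingEnd ℂ) (f x) * F).re) x := by
  have hre : HasDerivAt (fun t => (f t).re) F.re x := by
    exact (Complex.reCLM.hasFDerivAt.comp_hasDerivAt x hf)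
  have him : HasDerivAt (fun t => (f t).im) F.im x := by
    exact (Complex.imCLM.hasFDerivAt.comp_hasDerivAt x hf)
  have h2 := (hre.mul hre).add (him.mul him)
  have : (fun t => Complex.normSq (f t)) = fun t => (f t).re * (f t).re + (f t).im * (f t).im := by
    funext t; simp [Complex.normSq_apply]
  rw [this]
  refine h2.congr_deriv ?_
  rw [Complex.mul_re, Complex.conj_re, Complex.conj_im]; ring

theorem keyBound (b : ℕ → ℝ) (l K : ℕ)
    (hb : ∀ r < K, ∑ k ∈ Finset.range (l+1), b k * (k:ℝ)^r = 0) :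
    ∃ M ≥ (0:ℝ), ∀ x : ℂ, ‖x‖ = 1 →
      ‖∑ k ∈ Finset.range (l+1), (b k : ℂ) * x ^ k‖ ≤ M * ‖x - 1‖ ^ K := by
  set B : ℕ → ℝ := fun j => ∑ k ∈ Finset.range (l+1), b k * (k.choose j : ℝ) with hBdef
  have hB : ∀ j < K, B j = 0 := by
    intro j hj
    have hfac : (((Nat.factorial j : ℕ) : ℝ)) * B j = 0 := by
      rw [hBdef]
      simp only
      rw [Finset.mul_sum]
      have h1 : ∀ k ∈ Finset.range (l+1),
          ((Nat.factorial j : ℕ) : ℝ) * (b k * (k.choose j : ℝ)) = b k * ((descPochhammer ℝ j).eval (k:ℝ)) := by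
        intro k _
        rw [descPochhammer_eval_eq_descFactorial, Nat.descFactorial_eq_factorial_mul_choose]
        push_cast; ring
      rw [Finset.sum_congr rfl h1]
      have h2 : ∀ k ∈ Finset.range (l+1),
          b k * ((descPochhammer ℝ j).eval (k:ℝ))
          = ∑ i ∈ Finset.range (j+1), (descPochhammer ℝ j).coeff i * (b k * (k:ℝ)^i) := by
        intro k _
        rw [Polynomial.eval_eq_sum_range' (n := j+1), Finset.mul_sum]
        · exact Finset.sum_congr rfl (fun i _ => by ring)
        · rw [descPochhammer_natDegree]; omega
      rw [Finset.sum_congr rfl h2, Finset.sum_comm]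
      apply Finset.sum_eq_zero
      intro i hi
      rw [← Finset.mul_sum, hb i (by simp at hi; omega), mul_zero]
    have : ((Nat.factorial j : ℕ) : ℝ) ≠ 0 := Nat.cast_ne_zero.mpr (Nat.factorial_ne_zero j)
    exact (mul_eq_zero.mp hfac).resolve_left this
  refine ⟨∑ j ∈ Finset.range (l+1), |B j| * 2^j, Finset.sum_nonneg (fun j _ => by positivity), ?_⟩
  intro x hx
  have hx2 : ‖x - 1‖ ≤ 2 := by
    calc ‖x - 1‖ ≤ ‖x‖ + ‖(1:ℂ)‖ := norm_sub_le _ _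
    _ = 2 := by rw [hx, norm_one]; norm_num
  have heq : ∑ k ∈ Finset.range (l+1), (b k : ℂ) * x ^ k
      = ∑ j ∈ Finset.range (l+1), (B j : ℂ) * (x-1)^j := by
    have hxk : ∀ k ∈ Finset.range (l+1), (b k : ℂ) * x ^ k
        = ∑ j ∈ Finset.range (l+1), (b k : ℂ) * ((x-1)^j * (k.choose j : ℂ)) := by
      intro k hk
      have : x ^ k = ((x-1) + 1)^k := by ring_nf
      rw [this, add_pow]
      rw [Finset.mul_sum]
      rw [← Finset.sum_subset (Finset.range_subset.mpr (by simp at hk ⊢; omega) :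
            Finset.range (k+1) ⊆ Finset.range (l+1))]
      · exact Finset.sum_congr rfl (fun j _ => by rw [one_pow]; ring)
      · intro j _ hj
        simp at hj
        rw [Nat.choose_eq_zero_of_lt (by omega)]
        simp
    rw [Finset.sum_congr rfl hxk, Finset.sum_comm]
    apply Finset.sum_congr rfl
    intro j _
    rw [hBdef]
    push_cast
    rw [Finset.sum_mul]
    exact Finset.sum_congr rfl (fun k _ => by ring)
  rw [heq]
  calc ‖∑ j ∈ Finset.range (l+1), (B j : ℂ) * (x-1)^j‖
      ≤ ∑ j ∈ Finset.range (l+1), ‖(B j : ℂ) * (x-1)^j‖ := norm_sum_le _ _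
    _ ≤ ∑ j ∈ Finset.range (l+1), (|B j| * 2^j) * ‖x - 1‖ ^ K := by
        apply Finset.sum_le_sum
        intro j _
        rw [norm_mul, norm_pow, Complex.norm_real, Real.norm_eq_abs]
        by_cases hjK : j < K
        · rw [hB j hjK]; simp
        · push_neg at hjK
          have : ‖x-1‖^j = ‖x-1‖^K * ‖x-1‖^(j-K) := by
            rw [← pow_add]; congr 1; omega
          rw [this]
          have h1 : ‖x-1‖^(j-K) ≤ 2^j := by
            calc ‖x-1‖^(j-K) ≤ 2^(j-K) := pow_le_pow_left₀ (norm_nonneg _) hx2 _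
              _ ≤ 2^j := pow_le_pow_right₀ (by norm_num) (by omega)
          calc |B j| * (‖x-1‖^K * ‖x-1‖^(j-K)) ≤ |B j| * (‖x-1‖^K * 2^j) := by
                apply mul_le_mul_of_nonneg_left (mul_le_mul_of_nonneg_left h1 (by positivity)) (abs_nonneg _)
            _ = |B j| * 2^j * ‖x-1‖^K := by ring
    _ = (∑ j ∈ Finset.range (l+1), |B j| * 2^j) * ‖x - 1‖ ^ K := by rw [Finset.sum_mul]

theorem statement7 (a : ℕ → ℝ) (l K : ℕ) (ha : IsFilter a l K)
    (u : ℕ) (hu : 1 ≤ u) :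
    ∃ C > (0 : ℝ), ∀ ξ : ℝ,
      |haUU a l u ξ| ≤ C * min 1 (ξ ^ (2 * K)) ∧
      |deriv (haUU a l u) ξ| ≤ C * min 1 (|ξ| ^ (2 * K - 1)) := by
  obtain ⟨hK1, hKl, hmom, _⟩ := ha
  -- bounds from keyBound
  obtain ⟨M1, hM1, hM1b⟩ := keyBound a l K hmom
  obtain ⟨M2, hM2, hM2b⟩ := keyBound (fun k => a k * k) l (K-1) (by
    intro r hr
    have : ∀ k ∈ Finset.range (l+1), (a k * k) * (k:ℝ)^r = a k * (k:ℝ)^(r+1) := by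
      intro k _; rw [pow_succ]; ring
    rw [Finset.sum_congr rfl this]
    exact hmom (r+1) (by omega))
  -- the function f and its derivative
  set c : ℕ → ℂ := fun k => (k:ℂ) * (-Complex.I * u) with hc
  set f : ℝ → ℂ := fun ξ => ∑ k ∈ Finset.range (l+1), (a k : ℂ) * Complex.exp (c k * ξ) with hfdef
  set F : ℝ → ℂ := fun ξ => ∑ k ∈ Finset.range (l+1),
      (a k : ℂ) * (Complex.exp (c k * ξ) * c k) with hFdef
  have hexp : ∀ (ξ : ℝ) (k : ℕ), Complex.exp (c k * ξ)
      = Complex.exp (-Complex.I * u * ξ) ^ k := by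
    intro ξ k
    rw [← Complex.exp_nat_mul]
    congr 1
    rw [hc]; ring
  have hPa : ∀ ξ : ℝ, Pa a l (Complex.exp (-Complex.I * u * ξ)) = f ξ := by
    intro ξ
    rw [Pa, hfdef]
    exact Finset.sum_congr rfl (fun k _ => by rw [hexp])
  have hhaUU : haUU a l u = fun ξ => Complex.normSq (f ξ) := by
    funext ξ
    rw [haUU, hPa, Complex.sq_norm]
  have hfD : ∀ ξ : ℝ, HasDerivAt f (F ξ) ξ := by
    intro ξ
    rw [hfdef, hFdef]
    apply HasDerivAt.fun_sum
    intro k _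
    have hid : HasDerivAt (fun ξ : ℝ => (ξ : ℂ)) 1 ξ := by
      exact Complex.ofRealCLM.hasDerivAt
    have h1 : HasDerivAt (fun ξ : ℝ => c k * (ξ : ℂ)) (c k) ξ := by
      simpa using hid.const_mul (c k)
    exact (h1.cexp.const_mul ((a k : ℂ)))
  -- norm facts
  have hnorm : ∀ ξ : ℝ, ‖Complex.exp (-Complex.I * u * ξ)‖ = 1 := by
    intro ξ
    rw [Complex.norm_exp]
    simp
  have habs : ∀ ξ : ℝ, ‖(-Complex.I * u * ξ : ℂ)‖ = u * |ξ| := by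
    intro ξ
    simp [map_mul, Complex.norm_real, abs_of_nonneg]
  have hw2 : ∀ ξ : ℝ, ‖Complex.exp (-Complex.I * u * ξ) - 1‖ ≤ 2 := by
    intro ξ
    calc ‖Complex.exp (-Complex.I * u * ξ) - 1‖
        ≤ ‖Complex.exp (-Complex.I * u * ξ)‖ + ‖(1:ℂ)‖ := norm_sub_le _ _
      _ = 2 := by rw [hnorm, norm_one]; norm_num
  have hw1 : ∀ ξ : ℝ, ‖Complex.exp (-Complex.I * u * ξ) - 1‖ ≤ 2 * (u * |ξ|) := by
    intro ξ
    by_cases h : (u:ℝ) * |ξ| ≤ 1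
    · have := Complex.norm_exp_sub_one_le (x := -Complex.I * u * ξ) (by rw [habs]; exact h)
      rw [habs] at this
      exact this
    · push_neg at h
      calc ‖Complex.exp (-Complex.I * u * ξ) - 1‖ ≤ 2 := hw2 ξ
        _ ≤ 2 * ((u:ℝ) * |ξ|) := by nlinarith
  -- bound on ‖f ξ‖
  have hfb : ∀ ξ : ℝ, ‖f ξ‖ ≤ M1 * ‖Complex.exp (-Complex.I * u * ξ) - 1‖ ^ K := by
    intro ξ
    rw [← hPa, Pa]
    exact hM1b _ (hnorm ξ)
  -- bound on ‖F ξ‖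
  have hFb : ∀ ξ : ℝ, ‖F ξ‖ ≤ (u * M2) * ‖Complex.exp (-Complex.I * u * ξ) - 1‖ ^ (K-1) := by
    intro ξ
    have hFeq : F ξ = (-Complex.I * u) * ∑ k ∈ Finset.range (l+1),
        ((a k * k : ℝ) : ℂ) * (Complex.exp (-Complex.I * u * ξ)) ^ k := by
      rw [hFdef, Finset.mul_sum]
      apply Finset.sum_congr rfl
      intro k _
      rw [hexp, hc]
      push_cast
      ring
    rw [hFeq, norm_mul]
    have h1 : ‖-Complex.I * (u:ℂ)‖ = u := by
      simp [norm_mul]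
    rw [h1]
    have := hM2b (Complex.exp (-Complex.I * u * ξ)) (hnorm ξ)
    calc (u:ℝ) * ‖∑ k ∈ Finset.range (l+1), ((a k * k : ℝ) : ℂ) * (Complex.exp (-Complex.I * u * ξ)) ^ k‖
        ≤ (u:ℝ) * (M2 * ‖Complex.exp (-Complex.I * u * ξ) - 1‖ ^ (K-1)) := by
          apply mul_le_mul_of_nonneg_left this (by positivity)
      _ = (u * M2) * ‖Complex.exp (-Complex.I * u * ξ) - 1‖ ^ (K-1) := by ring
  -- constants
  set C1 : ℝ := M1^2 * (2*u)^(2*K) with hC1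
  set C2 : ℝ := (2 * M1 * (u * M2)) * (2*u)^(2*K-1) with hC2
  have hC1nn : 0 ≤ C1 := by positivity
  have hC2nn : 0 ≤ C2 := by positivity
  refine ⟨max C1 C2 + 1, by positivity, ?_⟩
  intro ξ
  set s := ‖Complex.exp (-Complex.I * u * ξ) - 1‖ with hs
  have hsnn : 0 ≤ s := norm_nonneg _
  have hs2 : s ≤ 2 := hw2 ξ
  have hs1 : s ≤ 2 * (u * |ξ|) := hw1 ξ
  have hu1 : (1:ℝ) ≤ u := by exact_mod_cast hu
  -- power bounds
  have hpow : ∀ n : ℕ, s ^ n ≤ (2*u)^n * min 1 (|ξ|^n) := by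
    intro n
    have h2u : (2:ℝ) ≤ 2*u := by nlinarith
    have ha1 : s ^ n ≤ (2*u)^n * 1 := by
      rw [mul_one]
      exact pow_le_pow_left₀ hsnn (le_trans hs2 h2u) n
    have ha2 : s ^ n ≤ (2*u)^n * |ξ|^n := by
      calc s ^ n ≤ (2 * (u * |ξ|))^n := pow_le_pow_left₀ hsnn hs1 n
        _ = (2*u)^n * |ξ|^n := by rw [← mul_pow]; ring_nf
    rcases le_total (1:ℝ) (|ξ|^n) with h | h
    · rw [min_eq_left h]; exact ha1
    · rw [min_eq_right h]; exact ha2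
  constructor
  · -- haUU bound
    have h1 : |haUU a l u ξ| = ‖f ξ‖^2 := by
      rw [hhaUU]
      rw [_root_.abs_of_nonneg (Complex.normSq_nonneg _)]
      rw [← Complex.sq_norm]
    rw [h1]
    have h2 : ‖f ξ‖^2 ≤ M1^2 * s^(2*K) := by
      have := hfb ξ
      rw [← hs] at this
      calc ‖f ξ‖^2 ≤ (M1 * s^K)^2 := by
            apply pow_le_pow_left₀ (norm_nonneg _) this
        _ = M1^2 * s^(2*K) := by rw [mul_pow, ← pow_mul]; ring_nf
    calc ‖f ξ‖^2 ≤ M1^2 * s^(2*K) := h2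
      _ ≤ M1^2 * ((2*u)^(2*K) * min 1 (|ξ|^(2*K))) := by
          apply mul_le_mul_of_nonneg_left (hpow (2*K)) (by positivity)
      _ = C1 * min 1 (|ξ|^(2*K)) := by rw [hC1]; ring
      _ = C1 * min 1 (ξ^(2*K)) := by
          rw [Even.pow_abs (by exact even_two_mul K)]
      _ ≤ (max C1 C2 + 1) * min 1 (ξ^(2*K)) := by
          apply mul_le_mul_of_nonneg_right (by
            calc C1 ≤ max C1 C2 := le_max_left _ _
              _ ≤ max C1 C2 + 1 := by linarith)
          have : (0:ℝ) ≤ ξ^(2*K) := by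
            rw [← Even.pow_abs (even_two_mul K)]; positivity
          exact le_min (by norm_num) this
  · -- derivative bound
    have hD : HasDerivAt (haUU a l u) (2 * ((starRingEnd ℂ) (f ξ) * F ξ).re) ξ := by
      rw [hhaUU]
      exact myNormSqDeriv f (F ξ) ξ (hfD ξ)
    rw [hD.deriv]
    have h3 : |2 * ((starRingEnd ℂ) (f ξ) * F ξ).re| ≤ 2 * (‖f ξ‖ * ‖F ξ‖) := by
      rw [abs_mul, _root_.abs_two]
      apply mul_le_mul_of_nonneg_left _ (by norm_num)
      calc |((starRingEnd ℂ) (f ξ) * F ξ).re| ≤ ‖(starRingEnd ℂ) (f ξ) * F ξ‖ := by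
            exact Complex.abs_re_le_norm _
        _ = ‖f ξ‖ * ‖F ξ‖ := by rw [norm_mul, RCLike.norm_conj]
    have h4 : 2 * (‖f ξ‖ * ‖F ξ‖) ≤ (2 * M1 * (u * M2)) * s^(2*K-1) := by
      have hKsum : K + (K - 1) = 2*K - 1 := by omega
      calc 2 * (‖f ξ‖ * ‖F ξ‖) ≤ 2 * ((M1 * s^K) * ((u * M2) * s^(K-1))) := by
            apply mul_le_mul_of_nonneg_left _ (by norm_num)
            apply mul_le_mul (hfb ξ) (hFb ξ) (norm_nonneg _) (by positivity)
        _ = (2 * M1 * (u * M2)) * s^(K + (K-1)) := by rw [pow_add]; ring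
        _ = (2 * M1 * (u * M2)) * s^(2*K-1) := by rw [hKsum]
    calc |2 * ((starRingEnd ℂ) (f ξ) * F ξ).re| ≤ (2 * M1 * (u * M2)) * s^(2*K-1) :=
          le_trans h3 h4
      _ ≤ (2 * M1 * (u * M2)) * ((2*u)^(2*K-1) * min 1 (|ξ|^(2*K-1))) := by
          apply mul_le_mul_of_nonneg_left (hpow (2*K-1)) (by positivity)
      _ = C2 * min 1 (|ξ|^(2*K-1)) := by rw [hC2]; ring
      _ ≤ (max C1 C2 + 1) * min 1 (|ξ|^(2*K-1)) := by
          apply mul_le_mul_of_nonneg_right (by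
            calc C2 ≤ max C1 C2 := le_max_right _ _
              _ ≤ max C1 C2 + 1 := by linarith)
          exact le_min (by norm_num) (by positivity)
end
end

section
/- Let α > 0 with α ≤ 1 and δ0 > 0. Let h and c be even functions on ℝ^d∖{0}, homogeneous of degree 0 and Lipschitz of order α on the sphere, with h positive (so inf_{S^{d−1}} h > 0). Let f be a measurable function on ℝ^d such that for every δ ∈ (0, δ0), (f(ξ) − c(ξ)|ξ|^{−h(ξ)}) · |ξ|^{h(ξ)+δ} → 0 as |ξ| → ∞. Let ρ be a Schwartz function on ℝ^{d−1} with ∫_{ℝ^{d−1}} ρ(γ) dγ = 1. Then the windowed Radon transform R_ρf(p) = ∫_{ℝ^{d−1}} f(γ, p) ρ(γ) dγ converges absolutely for |p| large, and for every δ ∈ (0, min(δ0, α)), (R_ρf(p) − c(θ0)|p|^{−h(θ0)}) · |p|^{h(θ0)+δ} → 0 as |p| → ∞. -/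
open MeasureTheory Filter

noncomputable section

/-- The point `(γ, p) ∈ ℝ^{m+1}` with `γ ∈ ℝ^m` and last coordinate `p`. -/
def app {m : ℕ} (γ : EuclideanSpace ℝ (Fin m)) (p : ℝ) :
    EuclideanSpace ℝ (Fin (m + 1)) :=
  WithLp.toLp 2 (Fin.snoc (α := fun _ => ℝ) (WithLp.ofLp γ) p)

/-- The direction `θ₀ = (0, …, 0, 1) ∈ ℝ^{m+1}`. -/
def theta0 (m : ℕ) : EuclideanSpace ℝ (Fin (m + 1)) := app 0 1

/-- `g` is homogeneous of degree `0` on `ℝ^n ∖ {0}`. -/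
def Homog0 {n : ℕ} (g : EuclideanSpace ℝ (Fin n) → ℝ) : Prop :=
  ∀ t : ℝ, 0 < t → ∀ ξ : EuclideanSpace ℝ (Fin n), ξ ≠ 0 → g (t • ξ) = g ξ

/-- `g` is even. -/
def EvenFn {n : ℕ} (g : EuclideanSpace ℝ (Fin n) → ℝ) : Prop :=
  ∀ ξ : EuclideanSpace ℝ (Fin n), g (-ξ) = g ξ

/-- `g` is Lipschitz of order `α` on the unit sphere. -/
def LipSphere {n : ℕ} (g : EuclideanSpace ℝ (Fin n) → ℝ) (α : ℝ) : Prop :=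
  ∃ L > (0 : ℝ), ∀ x y : EuclideanSpace ℝ (Fin n), ‖x‖ = 1 → ‖y‖ = 1 →
    |g x - g y| ≤ L * ‖x - y‖ ^ α

/-- `ρ` is rapidly decreasing. -/
def RapidDecay {n : ℕ} (ρ : EuclideanSpace ℝ (Fin n) → ℝ) : Prop :=
  ∀ k : ℕ, ∃ C > (0 : ℝ), ∀ x : EuclideanSpace ℝ (Fin n),
    |ρ x| ≤ C * (1 + ‖x‖) ^ (-(k : ℝ))

lemma norm_app {m : ℕ} (γ : EuclideanSpace ℝ (Fin m)) (p : ℝ) :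
    ‖app γ p‖ = Real.sqrt (‖γ‖^2 + p^2) := by
  rw [EuclideanSpace.norm_eq]
  congr 1
  rw [Fin.sum_univ_castSucc]
  simp only [app, WithLp.ofLp_toLp, Fin.snoc_castSucc, Fin.snoc_last, Real.norm_eq_abs, sq_abs]
  congr 1
  rw [EuclideanSpace.norm_eq, Real.sq_sqrt (by positivity)]
  simp [sq_abs]

lemma abs_le_norm_app {m : ℕ} (γ : EuclideanSpace ℝ (Fin m)) (p : ℝ) :
    |p| ≤ ‖app γ p‖ := by
  rw [norm_app, ← Real.sqrt_sq_eq_abs]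
  exact Real.sqrt_le_sqrt (by nlinarith [sq_nonneg ‖γ‖])

lemma norm_le_norm_app {m : ℕ} (γ : EuclideanSpace ℝ (Fin m)) (p : ℝ) :
    ‖γ‖ ≤ ‖app γ p‖ := by
  rw [norm_app]
  have := Real.sqrt_le_sqrt (show ‖γ‖^2 ≤ ‖γ‖^2 + p^2 by nlinarith [sq_nonneg p])
  rwa [Real.sqrt_sq (norm_nonneg γ)] at this

lemma norm_app_le {m : ℕ} (γ : EuclideanSpace ℝ (Fin m)) (p : ℝ) :
    ‖app γ p‖ ≤ ‖γ‖ + |p| := by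
  rw [norm_app, ← Real.sqrt_sq (by positivity : (0:ℝ) ≤ ‖γ‖ + |p|)]
  refine Real.sqrt_le_sqrt ?_
  nlinarith [abs_nonneg p, norm_nonneg γ, sq_abs p]

lemma app_sub {m : ℕ} (γ γ' : EuclideanSpace ℝ (Fin m)) (p p' : ℝ) :
    app γ p - app γ' p' = app (γ - γ') (p - p') := by
  ext i
  induction i using Fin.lastCases with
  | last => simp [app]
  | cast j => simp [app]

lemma app_neg {m : ℕ} (γ : EuclideanSpace ℝ (Fin m)) (p : ℝ) :
    -app γ p = app (-γ) (-p) := by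
  ext i
  induction i using Fin.lastCases with
  | last => simp [app]
  | cast j => simp [app]

lemma app_smul {m : ℕ} (t : ℝ) (γ : EuclideanSpace ℝ (Fin m)) (p : ℝ) :
    t • app γ p = app (t • γ) (t * p) := by
  ext i
  induction i using Fin.lastCases with
  | last => simp [app]
  | cast j => simp [app]

lemma norm_theta0 (m : ℕ) : ‖theta0 m‖ = 1 := by
  rw [theta0, norm_app]; simp

lemma app_ne_zero {m : ℕ} (γ : EuclideanSpace ℝ (Fin m)) {p : ℝ} (hp : p ≠ 0) :
    app γ p ≠ 0 := by
  intro hz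
  have := abs_le_norm_app γ p
  rw [hz, norm_zero] at this
  exact hp (abs_eq_zero.mp (le_antisymm this (abs_nonneg p)))

/-- The unit vector of `app γ p` for `p > 0` is within `2‖γ‖/p` of `θ₀`. -/
lemma unit_dist {m : ℕ} (γ : EuclideanSpace ℝ (Fin m)) {p : ℝ} (hp : 0 < p) :
    ‖(‖app γ p‖⁻¹ • app γ p) - theta0 m‖ ≤ 2 * ‖γ‖ / p := by
  set ξ := app γ p with hξ
  have hn : 0 < ‖ξ‖ := lt_of_lt_of_le (by simpa [abs_of_pos hp] using hp)
    (by simpa [abs_of_pos hp] using abs_le_norm_app γ p)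
  have h1 : ‖ξ‖⁻¹ • ξ = app (‖ξ‖⁻¹ • γ) (‖ξ‖⁻¹ * p) := app_smul _ _ _
  rw [h1, theta0, app_sub]
  have h2 : ‖app (‖ξ‖⁻¹ • γ - 0) (‖ξ‖⁻¹ * p - 1)‖ ≤ ‖‖ξ‖⁻¹ • γ - 0‖ + |‖ξ‖⁻¹ * p - 1| :=
    norm_app_le _ _
  refine h2.trans ?_
  have hpn : p ≤ ‖ξ‖ := by simpa [abs_of_pos hp] using abs_le_norm_app γ p
  have hγn : ‖ξ‖ - p ≤ ‖γ‖ := by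
    have := norm_app_le γ p
    rw [abs_of_pos hp] at this
    linarith
  have e1 : ‖‖ξ‖⁻¹ • γ - 0‖ = ‖γ‖ / ‖ξ‖ := by
    rw [sub_zero, norm_smul, norm_inv, Real.norm_eq_abs, abs_of_pos hn]
    ring
  have e2 : |‖ξ‖⁻¹ * p - 1| = (‖ξ‖ - p) / ‖ξ‖ := by
    rw [abs_of_nonpos, neg_sub]
    · field_simp
    · rw [sub_nonpos, inv_mul_le_iff₀ hn]; simpa using hpn
  rw [e1, e2]
  have k1 : ‖γ‖ / ‖ξ‖ ≤ ‖γ‖ / p := by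
    apply div_le_div_of_nonneg_left (norm_nonneg γ) hp hpn
  have k2 : (‖ξ‖ - p) / ‖ξ‖ ≤ ‖γ‖ / p := by
    have : (‖ξ‖ - p) / ‖ξ‖ ≤ ‖γ‖ / ‖ξ‖ := by
      exact div_le_div_of_nonneg_right hγn hn.le
    exact this.trans k1
  rw [show 2 * ‖γ‖ / p = ‖γ‖ / p + ‖γ‖ / p by ring]
  exact add_le_add k1 k2

section Bsec
variable {m : ℕ} {g : EuclideanSpace ℝ (Fin (m+1)) → ℝ} {α L : ℝ}

lemma hom_unit (hg : Homog0 g) {ξ : EuclideanSpace ℝ (Fin (m+1))} (hξ : ξ ≠ 0) :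
    g ξ = g (‖ξ‖⁻¹ • ξ) := by
  have hn : 0 < ‖ξ‖ := norm_pos_iff.mpr hξ
  have hu : ‖ξ‖⁻¹ • ξ ≠ 0 := smul_ne_zero (inv_ne_zero hn.ne') hξ
  have hs : ‖ξ‖ • (‖ξ‖⁻¹ • ξ) = ξ := by rw [smul_smul]; field_simp; exact one_smul _ _
  rw [← hg ‖ξ‖ hn _ hu, hs]

lemma norm_unit {ξ : EuclideanSpace ℝ (Fin (m+1))} (hξ : ξ ≠ 0) :
    ‖(‖ξ‖⁻¹ • ξ : EuclideanSpace ℝ (Fin (m+1)))‖ = 1 := by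
  have hn : 0 < ‖ξ‖ := norm_pos_iff.mpr hξ
  rw [norm_smul, norm_inv, Real.norm_eq_abs, abs_of_pos hn, inv_mul_cancel₀ hn.ne']

lemma key_est_pos (hα : 0 < α) (hhom : Homog0 g) (hL : 0 < L)
    (hlip : ∀ x y : EuclideanSpace ℝ (Fin (m+1)), ‖x‖ = 1 → ‖y‖ = 1 →
      |g x - g y| ≤ L * ‖x - y‖ ^ α)
    (γ : EuclideanSpace ℝ (Fin m)) {p : ℝ} (hp : 0 < p) :
    |g (app γ p) - g (theta0 m)| ≤ L * (2 * ‖γ‖ / p) ^ α := by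
  have hξ : app γ p ≠ 0 := app_ne_zero γ hp.ne'
  rw [hom_unit hhom hξ]
  refine (hlip _ _ (norm_unit hξ) (norm_theta0 m)).trans ?_
  have := unit_dist γ hp
  gcongr

lemma key_est (hα : 0 < α) (heven : EvenFn g) (hhom : Homog0 g) (hL : 0 < L)
    (hlip : ∀ x y : EuclideanSpace ℝ (Fin (m+1)), ‖x‖ = 1 → ‖y‖ = 1 →
      |g x - g y| ≤ L * ‖x - y‖ ^ α)
    (γ : EuclideanSpace ℝ (Fin m)) {p : ℝ} (hp : p ≠ 0) :
    |g (app γ p) - g (theta0 m)| ≤ L * (2 * ‖γ‖ / |p|) ^ α := by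
  rcases hp.lt_or_gt with hneg | hpos
  · have : g (app γ p) = g (app (-γ) (-p)) := by rw [← heven, app_neg]
    rw [this, show |p| = -p from abs_of_neg hneg]
    simpa using key_est_pos hα hhom hL hlip (-γ) (p := -p) (by linarith)
  · rw [abs_of_pos hpos]
    exact key_est_pos hα hhom hL hlip γ hpos

lemma bound_est (hα : 0 < α) (hhom : Homog0 g) (hL : 0 < L)
    (hlip : ∀ x y : EuclideanSpace ℝ (Fin (m+1)), ‖x‖ = 1 → ‖y‖ = 1 →
      |g x - g y| ≤ L * ‖x - y‖ ^ α)
    {ξ : EuclideanSpace ℝ (Fin (m+1))} (hξ : ξ ≠ 0) :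
    |g ξ| ≤ |g (theta0 m)| + L * 2 ^ α := by
  have h1 : |g ξ - g (theta0 m)| ≤ L * 2 ^ α := by
    rw [hom_unit hhom hξ]
    refine (hlip _ _ (norm_unit hξ) (norm_theta0 m)).trans ?_
    have : ‖(‖ξ‖⁻¹ • ξ : EuclideanSpace ℝ (Fin (m+1))) - theta0 m‖ ≤ 2 := by
      refine (norm_sub_le _ _).trans ?_
      rw [norm_unit hξ, norm_theta0]; norm_num
    gcongr
  calc |g ξ| ≤ |g ξ - g (theta0 m)| + |g (theta0 m)| := by
        refine (abs_add_le _ _).trans_eq' (by ring_nf)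
    _ ≤ |g (theta0 m)| + L * 2 ^ α := by linarith
end Bsec

section Csec

lemma one_sub_rpow_le {B u : ℝ} (hB : 1 ≤ B) (hu : 0 ≤ u) :
    1 - B ^ (-u) ≤ u * Real.log B := by
  have hB0 : (0:ℝ) < B := lt_of_lt_of_le one_pos hB
  rw [Real.rpow_def_of_pos hB0]
  have := Real.add_one_le_exp (Real.log B * (-u))
  nlinarith [Real.log_nonneg hB]

lemma rpow_sub_exp_le {B e1 e2 : ℝ} (hB : 1 ≤ B) (h12 : e1 ≤ e2) :
    B ^ (-e1) - B ^ (-e2) ≤ (e2 - e1) * Real.log B * B ^ (-e1) := by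
  have hB0 : (0:ℝ) < B := lt_of_lt_of_le one_pos hB
  have key : B ^ (-e2) = B ^ (-e1) * B ^ (-(e2 - e1)) := by
    rw [← Real.rpow_add hB0]; ring_nf
  rw [key]
  have h1 : 1 - B ^ (-(e2 - e1)) ≤ (e2 - e1) * Real.log B :=
    one_sub_rpow_le hB (by linarith)
  have h2 : (0:ℝ) ≤ B ^ (-e1) := Real.rpow_nonneg hB0.le _
  nlinarith

lemma abs_rpow_sub_exp {B e1 e2 : ℝ} (hB : 1 ≤ B) :
    |B ^ (-e1) - B ^ (-e2)| ≤ |e1 - e2| * Real.log B * B ^ (-(min e1 e2)) := by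
  have hB0 : (0:ℝ) < B := lt_of_lt_of_le one_pos hB
  rcases le_total e1 e2 with h | h
  · rw [abs_of_nonneg (by linarith [Real.rpow_le_rpow_of_exponent_le hB (neg_le_neg h)]),
      min_eq_left h, abs_of_nonpos (by linarith)]
    simpa [neg_sub] using rpow_sub_exp_le hB h
  · rw [abs_sub_comm, abs_of_nonneg (by linarith [Real.rpow_le_rpow_of_exponent_le hB (neg_le_neg h)]),
      min_eq_right h, abs_of_nonneg (by linarith)]
    exact rpow_sub_exp_le hB h

lemma rpow_sub_base_le {b a H : ℝ} (hb : 0 < b) (hba : b ≤ a) (hH : 0 ≤ H) :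
    b ^ (-H) - a ^ (-H) ≤ H * ((a - b) / b) * b ^ (-H) := by
  have ha : 0 < a := hb.trans_le hba
  have hr : 1 ≤ a / b := (one_le_div hb).mpr hba
  have key : a ^ (-H) = b ^ (-H) * (a / b) ^ (-H) := by
    rw [← Real.mul_rpow hb.le (by positivity)]
    congr 1
    field_simp
  rw [key]
  have h1 : 1 - (a / b) ^ (-H) ≤ H * Real.log (a / b) := one_sub_rpow_le hr hH
  have h2 : Real.log (a / b) ≤ a / b - 1 := by
    have := Real.log_le_sub_one_of_pos (show (0:ℝ) < a / b by positivity)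
    linarith
  have h3 : a / b - 1 = (a - b) / b := by field_simp
  have h4 : (0:ℝ) ≤ b ^ (-H) := Real.rpow_nonneg hb.le _
  calc b ^ (-H) - b ^ (-H) * (a/b) ^ (-H) = b ^ (-H) * (1 - (a/b) ^ (-H)) := by ring
    _ ≤ b ^ (-H) * (H * Real.log (a/b)) := mul_le_mul_of_nonneg_left h1 h4
    _ ≤ b ^ (-H) * (H * (a/b - 1)) :=
        mul_le_mul_of_nonneg_left (mul_le_mul_of_nonneg_left h2 hH) h4
    _ = H * ((a - b) / b) * b ^ (-H) := by rw [h3]; ring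

end Csec

section Dsec
variable {m : ℕ}

lemma cont_app (p : ℝ) : Continuous fun γ : EuclideanSpace ℝ (Fin m) => app γ p := by
  have : (fun γ : EuclideanSpace ℝ (Fin m) => app γ p) =
      (EuclideanSpace.equiv (Fin (m+1)) ℝ).symm ∘ (fun x : Fin m → ℝ => Fin.snoc x p) ∘
        (EuclideanSpace.equiv (Fin m) ℝ) := rfl
  rw [this]
  have hsnoc : Continuous (fun x : Fin m → ℝ => (Fin.snoc x p : Fin (m+1) → ℝ)) := by
    refine continuous_pi fun i => ?_
    induction i using Fin.lastCases with
    | last => simp only [Fin.snoc_last]; exact continuous_const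
    | cast j => simp only [Fin.snoc_castSucc]; exact continuous_apply j
  exact (EuclideanSpace.equiv (Fin (m+1)) ℝ).symm.continuous.comp
    (hsnoc.comp (EuclideanSpace.equiv (Fin m) ℝ).continuous)

lemma ev_cocompact {Q : ℝ → Prop} (hQ : ∃ P : ℝ, ∀ p : ℝ, P ≤ |p| → Q p) :
    ∀ᶠ p in Filter.cocompact ℝ, Q p := by
  obtain ⟨P, hP⟩ := hQ
  filter_upwards [tendsto_norm_cocompact_atTop.eventually_ge_atTop P] with p hp
  exact hP p (by simpa [Real.norm_eq_abs] using hp)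

lemma from_tendsto_cocompact {E : Type*} [NormedAddCommGroup E] [ProperSpace E]
    {F : E → ℝ} (h : Filter.Tendsto F (Filter.cocompact E) (nhds 0)) {ε : ℝ} (hε : 0 < ε) :
    ∃ R : ℝ, ∀ ξ : E, R ≤ ‖ξ‖ → |F ξ| ≤ ε := by
  have hev : ∀ᶠ ξ in Filter.cocompact E, |F ξ| ≤ ε := by
    have := h.eventually (Metric.ball_mem_nhds (0:ℝ) hε)
    filter_upwards [this] with ξ hξ
    simpa [Real.dist_eq] using (le_of_lt (by simpa [Metric.mem_ball, Real.dist_eq] using hξ))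
  rw [Filter.eventually_iff, Filter.mem_cocompact] at hev
  obtain ⟨K, hK, hKsub⟩ := hev
  obtain ⟨R, hR⟩ := hK.isBounded.subset_closedBall 0
  refine ⟨R + 1, fun ξ hξ => ?_⟩
  have : ξ ∉ K := by
    intro hmem
    have := hR hmem
    rw [Metric.mem_closedBall, dist_zero_right] at this
    linarith
  exact hKsub this

lemma rho_tail (ρ : SchwartzMap (EuclideanSpace ℝ (Fin m)) ℝ) (k : ℕ) :
    ∃ C > (0:ℝ), ∀ R : ℝ, 1 ≤ R →
      ∫ γ in {γ : EuclideanSpace ℝ (Fin m) | R < ‖γ‖}, |ρ γ| ≤ C * R ^ (-(k:ℝ)) := by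
  obtain ⟨C, hC, hCb⟩ := ρ.decay (k + (m+1)) 0
  have hIint : Integrable (fun γ : EuclideanSpace ℝ (Fin m) =>
      (1 + ‖γ‖) ^ (-((m:ℝ)+1))) volume := by
    have := integrable_one_add_norm (E := EuclideanSpace ℝ (Fin m)) (μ := volume)
      (r := (m:ℝ)+1) (by simp [finrank_euclideanSpace_fin])
    exact this
  set I : ℝ := ∫ γ : EuclideanSpace ℝ (Fin m), (1 + ‖γ‖) ^ (-((m:ℝ)+1)) with hI
  have hInn : 0 ≤ I := integral_nonneg fun γ => Real.rpow_nonneg (by positivity) _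
  refine ⟨C * 2 ^ (m+1) * I + 1, by positivity, fun R hR => ?_⟩
  have hR0 : (0:ℝ) < R := lt_of_lt_of_le one_pos hR
  set S : Set (EuclideanSpace ℝ (Fin m)) := {γ | R < ‖γ‖} with hS
  have hSm : MeasurableSet S := measurableSet_lt measurable_const measurable_norm
  have hpt : ∀ γ ∈ S, |ρ γ| ≤
      (C * 2 ^ (m+1) * R ^ (-(k:ℝ))) * (1 + ‖γ‖) ^ (-((m:ℝ)+1)) := by
    intro γ hγ
    set x := ‖γ‖ with hx
    have hxR : R < x := hγ
    have hx1 : (1:ℝ) ≤ x := hR.trans hxR.le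
    have hx0 : (0:ℝ) < x := lt_of_lt_of_le one_pos hx1
    have hb : |ρ γ| ≤ C * x ^ (-((k:ℝ) + ((m:ℝ)+1))) := by
      have h1 := hCb γ
      rw [norm_iteratedFDeriv_zero] at h1
      have h2 : x ^ (k + (m+1)) * |ρ γ| ≤ C := by
        simpa [Real.norm_eq_abs] using h1
      have h3 : x ^ (-((k:ℝ) + ((m:ℝ)+1))) = (x ^ (k + (m+1)) : ℝ)⁻¹ := by
        rw [← Real.rpow_natCast x (k + (m+1)), ← Real.rpow_neg hx0.le]
        push_cast
        ring_nf
      rw [h3, ← mul_le_mul_iff_of_pos_right (pow_pos hx0 (k + (m+1)))]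
      calc |ρ γ| * x ^ (k + (m+1)) = x ^ (k + (m+1)) * |ρ γ| := by ring
        _ ≤ C := h2
        _ = C * (x ^ (k + (m+1)))⁻¹ * x ^ (k + (m+1)) := by
            field_simp
    refine hb.trans ?_
    have hsplit : x ^ (-((k:ℝ) + ((m:ℝ)+1))) =
        x ^ (-(k:ℝ)) * x ^ (-((m:ℝ)+1)) := by
      rw [← Real.rpow_add hx0]; ring_nf
    have hk : x ^ (-(k:ℝ)) ≤ R ^ (-(k:ℝ)) :=
      Real.rpow_le_rpow_of_nonpos hR0 hxR.le (neg_nonpos.mpr (by positivity))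
    have hm2 : x ^ (-((m:ℝ)+1)) ≤ (2:ℝ) ^ (m+1) * (1 + x) ^ (-((m:ℝ)+1)) := by
      have h2x : 1 + x ≤ 2 * x := by linarith
      have h5 : (2 * x) ^ (-((m:ℝ)+1)) ≤ (1 + x) ^ (-((m:ℝ)+1)) :=
        Real.rpow_le_rpow_of_nonpos (by linarith) h2x (neg_nonpos.mpr (by positivity))
      have h6 : ((2:ℝ) * x) ^ (-((m:ℝ)+1)) = (2:ℝ) ^ (-((m:ℝ)+1)) * x ^ (-((m:ℝ)+1)) :=
        Real.mul_rpow (by norm_num) hx0.le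
      have h7 : x ^ (-((m:ℝ)+1)) = (2:ℝ) ^ ((m:ℝ)+1) * ((2:ℝ) * x) ^ (-((m:ℝ)+1)) := by
        have e0 : ((m:ℝ) + 1) + -((m:ℝ)+1) = 0 := by ring
        rw [h6, ← mul_assoc, ← Real.rpow_add (by norm_num : (0:ℝ) < 2), e0,
          Real.rpow_zero, one_mul]
      rw [h7]
      have h8 : ((2:ℝ) ^ ((m:ℝ)+1) : ℝ) = (2:ℝ) ^ (m+1) := by
        rw [← Real.rpow_natCast (2:ℝ) (m+1)]
        push_cast
        ring_nf
      rw [h8]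
      exact mul_le_mul_of_nonneg_left h5 (by positivity)
    calc C * x ^ (-((k:ℝ) + ((m:ℝ)+1)))
        = C * (x ^ (-(k:ℝ)) * x ^ (-((m:ℝ)+1))) := by rw [hsplit]
      _ ≤ C * (R ^ (-(k:ℝ)) * ((2:ℝ) ^ (m+1) * (1 + x) ^ (-((m:ℝ)+1)))) := by
          refine mul_le_mul_of_nonneg_left ?_ hC.le
          exact mul_le_mul hk hm2 (Real.rpow_nonneg hx0.le _) (Real.rpow_nonneg hR0.le _)
      _ = (C * 2 ^ (m+1) * R ^ (-(k:ℝ))) * (1 + x) ^ (-((m:ℝ)+1)) := by ring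
  -- now the integral estimate
  have hρint : IntegrableOn (fun γ : EuclideanSpace ℝ (Fin m) => |ρ γ|) S volume :=
    (ρ.integrable.abs).integrableOn
  have hbint : IntegrableOn (fun γ : EuclideanSpace ℝ (Fin m) =>
      (C * 2 ^ (m+1) * R ^ (-(k:ℝ))) * (1 + ‖γ‖) ^ (-((m:ℝ)+1))) S volume :=
    (hIint.const_mul _).integrableOn
  calc ∫ γ in S, |ρ γ|
      ≤ ∫ γ in S, (C * 2 ^ (m+1) * R ^ (-(k:ℝ))) * (1 + ‖γ‖) ^ (-((m:ℝ)+1)) :=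
        setIntegral_mono_on hρint hbint hSm hpt
    _ = (C * 2 ^ (m+1) * R ^ (-(k:ℝ))) * ∫ γ in S, (1 + ‖γ‖) ^ (-((m:ℝ)+1)) :=
        integral_const_mul _ _
    _ ≤ (C * 2 ^ (m+1) * R ^ (-(k:ℝ))) * I := by
        refine mul_le_mul_of_nonneg_left ?_ (by positivity)
        refine setIntegral_le_integral hIint ?_
        filter_upwards with γ using Real.rpow_nonneg (by positivity) _
    _ = (C * 2 ^ (m+1) * I) * R ^ (-(k:ℝ)) := by ring
    _ ≤ (C * 2 ^ (m+1) * I + 1) * R ^ (-(k:ℝ)) := by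
        refine mul_le_mul_of_nonneg_right (by linarith) (Real.rpow_nonneg hR0.le _)
end Dsec
set_option maxHeartbeats 1000000 in
theorem statement12 (m : ℕ) (hm : 1 ≤ m) (α δ₀ : ℝ) (hα : 0 < α) (hα1 : α ≤ 1)
    (hδ₀ : 0 < δ₀)
    (h c : EuclideanSpace ℝ (Fin (m + 1)) → ℝ)
    (hheven : EvenFn h) (hceven : EvenFn c)
    (hhhom : Homog0 h) (hchom : Homog0 c)
    (hhlip : LipSphere h α) (hclip : LipSphere c α)
    (hhpos : ∀ ξ : EuclideanSpace ℝ (Fin (m + 1)), ξ ≠ 0 → 0 < h ξ)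
    (f : EuclideanSpace ℝ (Fin (m + 1)) → ℝ) (hfmeas : Measurable f)
    (hf : ∀ δ ∈ Set.Ioo (0 : ℝ) δ₀,
      Tendsto (fun ξ : EuclideanSpace ℝ (Fin (m + 1)) =>
          (f ξ - c ξ * ‖ξ‖ ^ (-h ξ)) * ‖ξ‖ ^ (h ξ + δ))
        (cocompact _) (nhds 0))
    (ρ : SchwartzMap (EuclideanSpace ℝ (Fin m)) ℝ)
    (hρ : ∫ γ : EuclideanSpace ℝ (Fin m), ρ γ = 1) :
    (∃ P₀ : ℝ, ∀ p : ℝ, P₀ ≤ |p| →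
      Integrable (fun γ : EuclideanSpace ℝ (Fin m) => f (app γ p) * ρ γ)) ∧
    ∀ δ ∈ Set.Ioo (0 : ℝ) (min δ₀ α),
      Tendsto (fun p : ℝ =>
          ((∫ γ : EuclideanSpace ℝ (Fin m), f (app γ p) * ρ γ) -
            c (theta0 m) * |p| ^ (-h (theta0 m))) * |p| ^ (h (theta0 m) + δ))
        (cocompact ℝ) (nhds 0) := by
  classical
  obtain ⟨Lh, hLh, hlh⟩ := hhlip
  obtain ⟨Lc, hLc, hlc⟩ := hclip
  have hθ1 : ‖theta0 m‖ = 1 := norm_theta0 m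
  have hθne : theta0 m ≠ 0 := by
    intro h0; rw [h0, norm_zero] at hθ1; norm_num at hθ1
  set H0 := h (theta0 m) with hH0def
  set C0 := c (theta0 m) with hC0def
  have hH0 : 0 < H0 := hhpos _ hθne
  set Mc : ℝ := |C0| + Lc * 2 ^ α with hMcdef
  have hMc : ∀ ξ : EuclideanSpace ℝ (Fin (m+1)), ξ ≠ 0 → |c ξ| ≤ Mc :=
    fun ξ hξ => bound_est hα hchom hLc hlc hξ
  obtain ⟨R₀, hR₀⟩ := from_tendsto_cocompact
    (hf (δ₀/2) ⟨by linarith, by linarith⟩) one_pos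
  set R₁ : ℝ := max R₀ 1 with hR₁def
  have hR₁1 : (1:ℝ) ≤ R₁ := le_max_right _ _
  have hfb : ∀ ξ : EuclideanSpace ℝ (Fin (m+1)), R₁ ≤ ‖ξ‖ → |f ξ| ≤ Mc + 1 := by
    intro ξ hξ
    have h1ξ : (1:ℝ) ≤ ‖ξ‖ := le_trans hR₁1 hξ
    have hξne : ξ ≠ 0 := by
      intro h0; rw [h0, norm_zero] at h1ξ; norm_num at h1ξ
    have hhp : 0 < h ξ := hhpos ξ hξne
    have h2 := hR₀ ξ (le_trans (le_max_left _ _) hξ)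
    have hX1 : (1:ℝ) ≤ ‖ξ‖ ^ (h ξ + δ₀/2) := by
      rw [show (1:ℝ) = ‖ξ‖ ^ (0:ℝ) from (Real.rpow_zero _).symm]
      exact Real.rpow_le_rpow_of_exponent_le h1ξ (by linarith)
    have h3 : |f ξ - c ξ * ‖ξ‖ ^ (-h ξ)| ≤ 1 := by
      rw [abs_mul, abs_of_nonneg (Real.rpow_nonneg (norm_nonneg ξ) _)] at h2
      calc |f ξ - c ξ * ‖ξ‖ ^ (-h ξ)|
          ≤ |f ξ - c ξ * ‖ξ‖ ^ (-h ξ)| * ‖ξ‖ ^ (h ξ + δ₀/2) :=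
            le_mul_of_one_le_right (abs_nonneg _) hX1
        _ ≤ 1 := h2
    have h4 : ‖ξ‖ ^ (-h ξ) ≤ 1 :=
      Real.rpow_le_one_of_one_le_of_nonpos h1ξ (by linarith)
    have h5 : |c ξ * ‖ξ‖ ^ (-h ξ)| ≤ Mc := by
      rw [abs_mul, abs_of_nonneg (Real.rpow_nonneg (norm_nonneg ξ) _)]
      calc |c ξ| * ‖ξ‖ ^ (-h ξ) ≤ Mc * 1 :=
            mul_le_mul (hMc ξ hξne) h4 (Real.rpow_nonneg (norm_nonneg ξ) _)
              (le_trans (abs_nonneg _) (hMc ξ hξne))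
        _ = Mc := mul_one _
    calc |f ξ| = |(f ξ - c ξ * ‖ξ‖ ^ (-h ξ)) + c ξ * ‖ξ‖ ^ (-h ξ)| := by ring_nf
      _ ≤ |f ξ - c ξ * ‖ξ‖ ^ (-h ξ)| + |c ξ * ‖ξ‖ ^ (-h ξ)| := abs_add_le _ _
      _ ≤ 1 + Mc := add_le_add h3 h5
      _ = Mc + 1 := by ring
  have part1 : ∀ p : ℝ, R₁ ≤ |p| →
      Integrable (fun γ : EuclideanSpace ℝ (Fin m) => f (app γ p) * ρ γ) := by
    intro p hp
    have hmeas : AEStronglyMeasurable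
        (fun γ : EuclideanSpace ℝ (Fin m) => f (app γ p) * ρ γ) volume :=
      ((hfmeas.comp (cont_app p).measurable).mul
        ρ.continuous.measurable).aestronglyMeasurable
    refine Integrable.mono' ((ρ.integrable.abs).const_mul (Mc + 1)) hmeas ?_
    filter_upwards with γ
    rw [Real.norm_eq_abs, abs_mul]
    exact mul_le_mul_of_nonneg_right
      (hfb _ (le_trans hp (abs_le_norm_app γ p))) (abs_nonneg _)
  refine ⟨⟨R₁, part1⟩, ?_⟩
  intro δ hδ
  obtain ⟨hδ0, hδm⟩ := hδ
  have hδα : δ < α := lt_of_lt_of_le hδm (min_le_right _ _)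
  have hδδ₀ : δ < δ₀ := lt_of_lt_of_le hδm (min_le_left _ _)
  set δ' : ℝ := (δ + min δ₀ α)/2 with hδ'def
  have hδ'1 : δ < δ' := by
    have : δ < min δ₀ α := hδm
    rw [hδ'def]; linarith
  have hδ'2 : δ' < δ₀ := by
    have h1 : δ' < min δ₀ α := by rw [hδ'def]; linarith [hδm]
    exact lt_of_lt_of_le h1 (min_le_left _ _)
  have hδ'0 : 0 < δ' := lt_trans hδ0 hδ'1
  set s : ℝ := (α - δ)/(2*α) with hsdef
  have hs0 : 0 < s := div_pos (by linarith) (by linarith)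
  have hs1 : s < 1 := by
    rw [hsdef, div_lt_one (by linarith)]; linarith
  set κ : ℝ := (α - δ)/2 with hκdef
  have hκ0 : 0 < κ := by rw [hκdef]; linarith
  have hEs : α * (s - 1) = -(α + δ)/2 := by
    rw [hsdef]; field_simp; ring
  have hE1 : α * (s - 1) + δ = -κ := by rw [hEs, hκdef]; ring
  set κ2 : ℝ := 1 - s - δ with hκ2def
  have hκ20 : 0 < κ2 := by
    have hs2 : s < 1 - δ := by
      rw [hsdef, div_lt_iff₀ (by linarith)]
      nlinarith
    rw [hκ2def]; linarith
  set τ : ℝ := κ/4 with hτdef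
  have hτ0 : 0 < τ := by rw [hτdef]; linarith
  have hτ1 : τ ≤ 1 := by rw [hτdef, hκdef]; linarith
  set κ3 : ℝ := min (κ/2) κ2 with hκ3def
  have hκ30 : 0 < κ3 := lt_min (by linarith) hκ20
  have hκ3a : κ3 ≤ κ/2 := min_le_left _ _
  have hκ3b : κ3 ≤ κ2 := min_le_right _ _
  set k : ℕ := ⌈(H0 + δ + 1)/s⌉₊ with hkdef
  have hk : H0 + δ + 1 ≤ (k:ℝ) * s := by
    have h1 := Nat.le_ceil ((H0 + δ + 1)/s)
    rw [div_le_iff₀ hs0] at h1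
    exact h1
  obtain ⟨Ct, hCt0, hCt⟩ := rho_tail ρ k
  set Iρ : ℝ := ∫ γ : EuclideanSpace ℝ (Fin m), |ρ γ| with hIρdef
  have hIρ0 : 0 ≤ Iρ := integral_nonneg fun γ => abs_nonneg _
  set A : ℝ := Lc * 2^α + |C0| * (Lh * 2^α) * (2/τ) + |C0| * H0 with hAdef
  have hA0 : 0 ≤ A := by
    rw [hAdef]
    have := abs_nonneg C0
    positivity
  set M1 : ℝ := Mc + 1 + |C0| with hM1def
  have hM10 : 0 < M1 := by
    rw [hM1def, hMcdef]
    positivity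
  set c₀ : ℝ := min (min τ (H0/2)) (δ' - δ) with hc₀def
  have hc₀0 : 0 < c₀ := lt_min (lt_min hτ0 (by linarith)) (by linarith)
  have claim : ∀ ε : ℝ, 0 < ε → ε ≤ 1 → ∀ᶠ p in cocompact ℝ,
      |((∫ γ : EuclideanSpace ℝ (Fin m), f (app γ p) * ρ γ) -
          C0 * |p| ^ (-H0)) * |p| ^ (H0 + δ)|
        ≤ ε * Iρ + (A * Iρ) * |p| ^ (-κ3) + (M1 * (Ct + 1)) * |p| ^ (-(1:ℝ)) := by
    intro ε hε hε1
    obtain ⟨Rε, hRε⟩ := from_tendsto_cocompact (hf δ' ⟨hδ'0, hδ'2⟩) hε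
    have evge : ∀ X : ℝ, ∀ᶠ p in cocompact ℝ, X ≤ |p| := by
      intro X
      filter_upwards [tendsto_norm_cocompact_atTop.eventually_ge_atTop X] with p hp
      simpa [Real.norm_eq_abs] using hp
    have evη : ∀ᶠ p in cocompact ℝ, Lh * 2^α * |p| ^ (α*(s-1)) ≤ c₀ := by
      have h1 : Tendsto (fun x:ℝ => x ^ (-((α+δ)/2))) atTop (nhds 0) :=
        tendsto_rpow_neg_atTop (by linarith)
      have h2 := (h1.comp (tendsto_norm_cocompact_atTop (E := ℝ))).const_mul (Lh * 2^α)
      rw [mul_zero] at h2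
      have h4 := h2.eventually_le_const hc₀0
      filter_upwards [h4] with p hp
      have heq : Lh * 2^α * |p| ^ (α*(s-1)) = Lh * 2^α * (|p| ^ (-((α+δ)/2))) := by
        rw [show α*(s-1) = -((α+δ)/2) from by rw [hEs]; ring]
      rw [heq]
      simpa [Function.comp, Real.norm_eq_abs] using hp
    filter_upwards [evge 1, evge R₁, evge Rε, evη] with p hq1 hqR₁ hqRε hqη
    set q : ℝ := |p| with hqdef
    have hq0 : 0 < q := lt_of_lt_of_le one_pos hq1
    have hexp : ∀ e1 e2 : ℝ, e1 ≤ e2 → q ^ (-e2) ≤ q ^ (-e1) := fun e1 e2 hh =>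
      Real.rpow_le_rpow_of_exponent_le hq1 (by linarith)
    set w : ℝ := 2^α * q ^ (α*(s-1)) with hwdef
    have hw0 : 0 ≤ w := by
      rw [hwdef]
      positivity
    have hηc₀ : Lh * w ≤ c₀ := by
      calc Lh * w = Lh * 2^α * q ^ (α*(s-1)) := by rw [hwdef]; ring
        _ ≤ c₀ := hqη
    have hητ : Lh * w ≤ τ := le_trans hηc₀ (le_trans (min_le_left _ _) (min_le_left _ _))
    have hηH : Lh * w ≤ H0/2 := le_trans hηc₀ (le_trans (min_le_left _ _) (min_le_right _ _))
    have hηδ : Lh * w ≤ δ' - δ := le_trans hηc₀ (min_le_right _ _)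
    have hLw0 : 0 ≤ Lh * w := mul_nonneg hLh.le hw0
    set B : ℝ := q ^ s with hBdef
    have hB1 : 1 ≤ B := by
      rw [hBdef, show (1:ℝ) = q ^ (0:ℝ) from (Real.rpow_zero q).symm]
      exact Real.rpow_le_rpow_of_exponent_le hq1 hs0.le
    have hBq : B ≤ q := by
      rw [hBdef]
      calc q^s ≤ q^(1:ℝ) := Real.rpow_le_rpow_of_exponent_le hq1 hs1.le
        _ = q := Real.rpow_one q
    have hmulqs : q ^ s = q^(s-1) * q := by
      have h1 := Real.rpow_add hq0 (s-1) 1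
      rw [Real.rpow_one] at h1
      rw [show s - 1 + 1 = s from by ring] at h1
      exact h1
    set K : ℝ := C0 * q ^ (-H0) with hKdef
    have hKabs : |K| ≤ |C0| := by
      rw [hKdef, abs_mul, abs_of_nonneg (Real.rpow_nonneg hq0.le _)]
      calc |C0| * q^(-H0) ≤ |C0| * 1 :=
            mul_le_mul_of_nonneg_left
              (Real.rpow_le_one_of_one_le_of_nonpos hq1 (by linarith)) (abs_nonneg _)
        _ = |C0| := mul_one _
    have hqcomb : ∀ e : ℝ, e ≤ -κ3 - (H0+δ) → q ^ e ≤ q^(-κ3) * q^(-(H0+δ)) := by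
      intro e he
      rw [← Real.rpow_add hq0]
      exact Real.rpow_le_rpow_of_exponent_le hq1 (by linarith)
    have hinner : ∀ γ : EuclideanSpace ℝ (Fin m), ‖γ‖ ≤ B →
        |f (app γ p) - K| ≤ (ε + A * q ^ (-κ3)) * q ^ (-(H0+δ)) := by
      intro γ hγB
      have hp0 : p ≠ 0 := by
        intro h0
        have : q = 0 := by rw [hqdef, h0, abs_zero]
        linarith
      set ξ := app γ p with hξdef
      have hqξ : q ≤ ‖ξ‖ := by rw [hqdef]; exact abs_le_norm_app γ p
      have h1ξ : (1:ℝ) ≤ ‖ξ‖ := le_trans hq1 hqξ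
      have hξ2q : ‖ξ‖ ≤ 2*q := by
        have h1 := norm_app_le γ p
        rw [← hqdef] at h1
        have : ‖ξ‖ ≤ ‖γ‖ + q := h1
        linarith [hγB, hBq]
      have hξne : ξ ≠ 0 := app_ne_zero γ hp0
      have hhξpos : 0 < h ξ := hhpos ξ hξne
      have hnξ : ∀ e : ℝ, 0 ≤ e → ‖ξ‖ ^ (-e) ≤ q ^ (-e) := fun e he =>
        Real.rpow_le_rpow_of_nonpos hq0 hqξ (neg_nonpos.mpr he)
      have hbasew : (2*‖γ‖/q) ^ α ≤ w := by
        have hstep : 2*‖γ‖/q ≤ 2 * q^(s-1) := by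
          rw [div_le_iff₀ hq0]
          calc 2*‖γ‖ ≤ 2*B := by linarith
            _ = 2*(q^(s-1)*q) := by rw [hBdef, hmulqs]
            _ = 2*q^(s-1)*q := by ring
        calc (2*‖γ‖/q)^α ≤ (2*q^(s-1))^α :=
              Real.rpow_le_rpow (by positivity) hstep hα.le
          _ = 2^α * (q^(s-1))^α := Real.mul_rpow (by norm_num) (Real.rpow_nonneg hq0.le _)
          _ = 2^α * q^((s-1)*α) := by rw [← Real.rpow_mul hq0.le]
          _ = w := by rw [hwdef, mul_comm (s-1) α]
      have hη : |h ξ - H0| ≤ Lh * w := by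
        have h1 := key_est hα hheven hhhom hLh hlh γ hp0
        rw [← hqdef] at h1
        exact h1.trans (mul_le_mul_of_nonneg_left hbasew hLh.le)
      have hcc : |c ξ - C0| ≤ Lc * w := by
        have h1 := key_est hα hceven hchom hLc hlc γ hp0
        rw [← hqdef] at h1
        exact h1.trans (mul_le_mul_of_nonneg_left hbasew hLc.le)
      have hhξlow : H0 - Lh * w ≤ h ξ := by
        have h1 := (abs_le.mp hη).1
        linarith
      have hfe : |f ξ - c ξ * ‖ξ‖ ^ (-h ξ)| ≤ ε * ‖ξ‖ ^ (-(h ξ + δ')) := by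
        have h2 := hRε ξ (le_trans hqRε hqξ)
        have hXpos : 0 < ‖ξ‖ ^ (h ξ + δ') := Real.rpow_pos_of_pos (by linarith) _
        rw [abs_mul, abs_of_pos hXpos] at h2
        have hrw : ε * ‖ξ‖ ^ (-(h ξ + δ')) = ε / ‖ξ‖ ^ (h ξ + δ') := by
          rw [Real.rpow_neg (norm_nonneg ξ), div_eq_mul_inv]
        rw [hrw]
        exact (le_div_iff₀ hXpos).mpr h2
      have ht1 : |f ξ - c ξ * ‖ξ‖ ^ (-h ξ)| ≤ ε * q ^ (-(H0+δ)) := by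
        refine hfe.trans ?_
        refine mul_le_mul_of_nonneg_left ?_ hε.le
        calc ‖ξ‖ ^ (-(h ξ + δ')) ≤ q ^ (-(h ξ + δ')) := hnξ _ (by linarith)
          _ ≤ q ^ (-(H0+δ)) := hexp _ _ (by linarith [hhξlow, hηδ])
      have ht2 : |c ξ - C0| * ‖ξ‖ ^ (-h ξ) ≤ (Lc * 2^α) * (q^(-κ3) * q^(-(H0+δ))) := by
        have hs1' : ‖ξ‖ ^ (-h ξ) ≤ q ^ (-(H0 - τ)) := by
          calc ‖ξ‖ ^ (-h ξ) ≤ q ^ (-h ξ) := hnξ _ hhξpos.le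
            _ ≤ q ^ (-(H0-τ)) := hexp _ _ (by linarith [hhξlow, hητ])
        calc |c ξ - C0| * ‖ξ‖ ^ (-h ξ) ≤ (Lc * w) * q ^ (-(H0-τ)) :=
              mul_le_mul hcc hs1' (Real.rpow_nonneg (norm_nonneg ξ) _)
                (mul_nonneg hLc.le hw0)
          _ = (Lc * 2^α) * (q ^ (α*(s-1)) * q ^ (-(H0-τ))) := by rw [hwdef]; ring
          _ = (Lc * 2^α) * q ^ (α*(s-1) + -(H0-τ)) := by rw [← Real.rpow_add hq0]
          _ ≤ (Lc * 2^α) * (q^(-κ3) * q^(-(H0+δ))) := by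
              refine mul_le_mul_of_nonneg_left (hqcomb _ ?_) (by positivity)
              linarith [hE1, hκ3a]
      have ht3 : |C0| * |‖ξ‖^(-h ξ) - ‖ξ‖^(-H0)| ≤
          (|C0| * (Lh * 2^α) * (2/τ)) * (q^(-κ3) * q^(-(H0+δ))) := by
        have hlog : Real.log ‖ξ‖ ≤ (2/τ) * q^τ := by
          have h1 := Real.log_le_rpow_div (norm_nonneg ξ) hτ0
          have h2 : ‖ξ‖ ^ τ ≤ 2 * q^τ := by
            calc ‖ξ‖^τ ≤ (2*q)^τ := Real.rpow_le_rpow (norm_nonneg ξ) hξ2q hτ0.le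
              _ = 2^τ * q^τ := Real.mul_rpow (by norm_num) hq0.le
              _ ≤ 2 * q^τ := by
                  refine mul_le_mul_of_nonneg_right ?_ (Real.rpow_nonneg hq0.le _)
                  calc (2:ℝ)^τ ≤ 2^(1:ℝ) := Real.rpow_le_rpow_of_exponent_le one_le_two hτ1
                    _ = 2 := Real.rpow_one 2
          calc Real.log ‖ξ‖ ≤ ‖ξ‖^τ / τ := h1
            _ ≤ (2*q^τ)/τ := by gcongr
            _ = (2/τ) * q^τ := by ring
        have hminlow : 0 ≤ min (h ξ) H0 := le_min hhξpos.le hH0.le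
        have h4 := abs_rpow_sub_exp (B := ‖ξ‖) (e1 := h ξ) (e2 := H0) h1ξ
        have h5 : ‖ξ‖ ^ (-(min (h ξ) H0)) ≤ q ^ (-(H0 - τ)) := by
          calc ‖ξ‖ ^ (-(min (h ξ) H0)) ≤ q ^ (-(min (h ξ) H0)) := hnξ _ hminlow
            _ ≤ q ^ (-(H0-τ)) := hexp _ _ (le_min (by linarith [hhξlow, hητ]) (by linarith [hτ0]))
        have h6 : |‖ξ‖^(-h ξ) - ‖ξ‖^(-H0)| ≤ (Lh*w) * ((2/τ)*q^τ) * q^(-(H0-τ)) := by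
          refine h4.trans ?_
          have hlogn : 0 ≤ Real.log ‖ξ‖ := Real.log_nonneg h1ξ
          refine mul_le_mul (mul_le_mul hη hlog hlogn hLw0) h5
            (Real.rpow_nonneg (norm_nonneg ξ) _) ?_
          exact mul_nonneg hLw0 (by positivity)
        calc |C0| * |‖ξ‖^(-h ξ) - ‖ξ‖^(-H0)|
            ≤ |C0| * ((Lh*w) * ((2/τ)*q^τ) * q^(-(H0-τ))) :=
              mul_le_mul_of_nonneg_left h6 (abs_nonneg _)
          _ = (|C0| * (Lh*2^α) * (2/τ)) * (q^(α*(s-1)) * (q^τ * q^(-(H0-τ)))) := by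
              rw [hwdef]; ring
          _ = (|C0| * (Lh*2^α) * (2/τ)) * (q^(α*(s-1)) * q^(τ + -(H0-τ))) := by
              rw [← Real.rpow_add hq0]
          _ = (|C0| * (Lh*2^α) * (2/τ)) * q^(α*(s-1) + (τ + -(H0-τ))) := by
              rw [← Real.rpow_add hq0]
          _ ≤ (|C0| * (Lh*2^α) * (2/τ)) * (q^(-κ3) * q^(-(H0+δ))) := by
              refine mul_le_mul_of_nonneg_left (hqcomb _ ?_) ?_
              · linarith [hE1, hκ3a]
              · exact mul_nonneg (mul_nonneg (abs_nonneg _) (by positivity)) (by positivity)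
      have ht4 : |C0| * (q^(-H0) - ‖ξ‖^(-H0)) ≤ (|C0| * H0) * (q^(-κ3) * q^(-(H0+δ))) := by
        have h1 := rpow_sub_base_le hq0 hqξ hH0.le
        have h2 : (‖ξ‖ - q)/q ≤ q^(s-1) := by
          have h3 : ‖ξ‖ - q ≤ B := by
            have h7 := norm_app_le γ p
            rw [← hqdef] at h7
            have : ‖ξ‖ ≤ ‖γ‖ + q := h7
            linarith
          calc (‖ξ‖ - q)/q ≤ B/q := by gcongr
            _ = q^(s-1) := by
                rw [hBdef, hmulqs]
                field_simp
        calc |C0| * (q^(-H0) - ‖ξ‖^(-H0)) ≤ |C0| * (H0 * ((‖ξ‖-q)/q) * q^(-H0)) :=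
              mul_le_mul_of_nonneg_left h1 (abs_nonneg _)
          _ ≤ |C0| * (H0 * q^(s-1) * q^(-H0)) := by
              refine mul_le_mul_of_nonneg_left ?_ (abs_nonneg _)
              exact mul_le_mul_of_nonneg_right
                (mul_le_mul_of_nonneg_left h2 hH0.le) (Real.rpow_nonneg hq0.le _)
          _ = (|C0| * H0) * (q^(s-1) * q^(-H0)) := by ring
          _ = (|C0| * H0) * q^((s-1) + -H0) := by rw [← Real.rpow_add hq0]
          _ ≤ (|C0| * H0) * (q^(-κ3) * q^(-(H0+δ))) := by
              refine mul_le_mul_of_nonneg_left (hqcomb _ ?_)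
                (mul_nonneg (abs_nonneg _) hH0.le)
              linarith [hκ3b]
      have hmono : ‖ξ‖^(-H0) ≤ q^(-H0) := hnξ _ hH0.le
      have e : f ξ - K = (f ξ - c ξ * ‖ξ‖^(-h ξ)) + (c ξ - C0) * ‖ξ‖^(-h ξ)
          + C0 * (‖ξ‖^(-h ξ) - ‖ξ‖^(-H0)) + C0 * (‖ξ‖^(-H0) - q^(-H0)) := by
        rw [hKdef]; ring
      have habs : |f ξ - K| ≤ |f ξ - c ξ * ‖ξ‖^(-h ξ)| + |(c ξ - C0) * ‖ξ‖^(-h ξ)|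
          + |C0 * (‖ξ‖^(-h ξ) - ‖ξ‖^(-H0))| + |C0 * (‖ξ‖^(-H0) - q^(-H0))| := by
        rw [e]
        exact (abs_add_le _ _).trans (add_le_add (abs_add_three _ _ _) le_rfl)
      have hb2 : |(c ξ - C0) * ‖ξ‖^(-h ξ)| = |c ξ - C0| * ‖ξ‖^(-h ξ) := by
        rw [abs_mul, abs_of_nonneg (Real.rpow_nonneg (norm_nonneg ξ) _)]
      have hb3 : |C0 * (‖ξ‖^(-h ξ) - ‖ξ‖^(-H0))| = |C0| * |‖ξ‖^(-h ξ) - ‖ξ‖^(-H0)| :=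
        abs_mul _ _
      have hb4 : |C0 * (‖ξ‖^(-H0) - q^(-H0))| = |C0| * (q^(-H0) - ‖ξ‖^(-H0)) := by
        rw [abs_mul, abs_of_nonpos (sub_nonpos.mpr hmono), neg_sub]
      rw [hb2, hb3, hb4] at habs
      calc |f ξ - K| ≤ _ := habs
        _ ≤ ε * q^(-(H0+δ)) + (Lc*2^α) * (q^(-κ3)*q^(-(H0+δ)))
            + (|C0| * (Lh*2^α) * (2/τ)) * (q^(-κ3)*q^(-(H0+δ)))
            + (|C0| * H0) * (q^(-κ3)*q^(-(H0+δ))) :=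
            add_le_add (add_le_add (add_le_add ht1 ht2) ht3) ht4
        _ = (ε + A * q^(-κ3)) * q^(-(H0+δ)) := by rw [hAdef]; ring
    have houter : ∀ γ : EuclideanSpace ℝ (Fin m), |f (app γ p) - K| ≤ M1 := by
      intro γ
      have hqξ : q ≤ ‖app γ p‖ := by rw [hqdef]; exact abs_le_norm_app γ p
      have hfb1 := hfb (app γ p) (le_trans hqR₁ hqξ)
      calc |f (app γ p) - K| ≤ |f (app γ p)| + |K| := abs_sub _ _
        _ ≤ (Mc + 1) + |C0| := add_le_add hfb1 hKabs
        _ = M1 := by rw [hM1def]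
    have hint1 : Integrable (fun γ : EuclideanSpace ℝ (Fin m) => f (app γ p) * ρ γ)
        volume := part1 p (by rw [← hqdef]; exact hqR₁)
    have hintK : Integrable (fun γ : EuclideanSpace ℝ (Fin m) => K * ρ γ) volume :=
      ρ.integrable.const_mul K
    have heqsub : (fun γ : EuclideanSpace ℝ (Fin m) => (f (app γ p) - K) * ρ γ)
        = fun γ => f (app γ p) * ρ γ - K * ρ γ := by funext γ; ring
    have hint2 : Integrable
        (fun γ : EuclideanSpace ℝ (Fin m) => (f (app γ p) - K) * ρ γ) volume := by
      rw [heqsub]; exact hint1.sub hintK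
    have hKint : (∫ γ : EuclideanSpace ℝ (Fin m), K * ρ γ) = K := by
      rw [integral_const_mul, hρ, mul_one]
    have hrepr : (∫ γ : EuclideanSpace ℝ (Fin m), f (app γ p) * ρ γ) - K
        = ∫ γ : EuclideanSpace ℝ (Fin m), (f (app γ p) - K) * ρ γ := by
      rw [heqsub, integral_sub hint1 hintK, hKint]
    set S : Set (EuclideanSpace ℝ (Fin m)) := {γ | B < ‖γ‖} with hSdef
    have hSm : MeasurableSet S := measurableSet_lt measurable_const measurable_norm
    set Cst : ℝ := (ε + A * q^(-κ3)) * q^(-(H0+δ)) with hCstdef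
    have hCst0 : 0 ≤ Cst := by
      rw [hCstdef]
      exact mul_nonneg (add_nonneg hε.le (mul_nonneg hA0 (Real.rpow_nonneg hq0.le _)))
        (Real.rpow_nonneg hq0.le _)
    have habs_int : ∀ T : Set (EuclideanSpace ℝ (Fin m)),
        |∫ γ in T, (f (app γ p) - K) * ρ γ| ≤ ∫ γ in T, |(f (app γ p) - K) * ρ γ| := by
      intro T
      have h1 := norm_integral_le_integral_norm (μ := volume.restrict T)
          (fun γ : EuclideanSpace ℝ (Fin m) => (f (app γ p) - K) * ρ γ)
      simp only [Real.norm_eq_abs] at h1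
      exact h1
    have habsint : Integrable
        (fun γ : EuclideanSpace ℝ (Fin m) => |(f (app γ p) - K) * ρ γ|) volume :=
      hint2.abs
    have hIin : |∫ γ in Sᶜ, (f (app γ p) - K) * ρ γ| ≤ Cst * Iρ := by
      refine (habs_int Sᶜ).trans ?_
      calc ∫ γ in Sᶜ, |(f (app γ p) - K) * ρ γ|
          ≤ ∫ γ in Sᶜ, Cst * |ρ γ| := by
            refine setIntegral_mono_on habsint.integrableOn
              (((ρ.integrable.abs).const_mul Cst).integrableOn) hSm.compl ?_
            intro γ hγ
            rw [abs_mul]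
            refine mul_le_mul_of_nonneg_right ?_ (abs_nonneg _)
            refine hinner γ (le_of_not_gt ?_)
            simpa [hSdef] using hγ
        _ = Cst * ∫ γ in Sᶜ, |ρ γ| := integral_const_mul _ _
        _ ≤ Cst * Iρ := by
            refine mul_le_mul_of_nonneg_left ?_ hCst0
            refine setIntegral_le_integral ρ.integrable.abs ?_
            filter_upwards with γ using abs_nonneg _
    have hIout : |∫ γ in S, (f (app γ p) - K) * ρ γ| ≤ M1 * (Ct * B^(-(k:ℝ))) := by
      refine (habs_int S).trans ?_
      calc ∫ γ in S, |(f (app γ p) - K) * ρ γ|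
          ≤ ∫ γ in S, M1 * |ρ γ| := by
            refine setIntegral_mono_on habsint.integrableOn
              (((ρ.integrable.abs).const_mul M1).integrableOn) hSm ?_
            intro γ hγ
            rw [abs_mul]
            exact mul_le_mul_of_nonneg_right (houter γ) (abs_nonneg _)
        _ = M1 * ∫ γ in S, |ρ γ| := integral_const_mul _ _
        _ ≤ M1 * (Ct * B^(-(k:ℝ))) :=
            mul_le_mul_of_nonneg_left (hCt B hB1) hM10.le
    have htotal : |(∫ γ : EuclideanSpace ℝ (Fin m), f (app γ p) * ρ γ) - K|
        ≤ Cst * Iρ + M1 * (Ct * B^(-(k:ℝ))) := by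
      rw [hrepr, ← integral_add_compl hSm hint2]
      exact (abs_add_le _ _).trans (by rw [add_comm (Cst * Iρ)]; exact add_le_add hIout hIin)
    have hq2 : (0:ℝ) ≤ q ^ (H0+δ) := Real.rpow_nonneg hq0.le _
    rw [abs_mul, abs_of_nonneg hq2]
    have hqq : q^(-(H0+δ)) * q^(H0+δ) = 1 := by
      rw [← Real.rpow_add hq0, show -(H0+δ) + (H0+δ) = 0 from by ring, Real.rpow_zero]
    have hBk : B^(-(k:ℝ)) * q^(H0+δ) ≤ q^(-(1:ℝ)) := by
      have h1 : B^(-(k:ℝ)) = q^(s * -(k:ℝ)) := by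
        rw [hBdef]
        exact (Real.rpow_mul hq0.le s _).symm
      calc B^(-(k:ℝ)) * q^(H0+δ) = q^(s * -(k:ℝ)) * q^(H0+δ) := by rw [h1]
        _ = q^(s * -(k:ℝ) + (H0+δ)) := by rw [← Real.rpow_add hq0]
        _ ≤ q^(-(1:ℝ)) := Real.rpow_le_rpow_of_exponent_le hq1 (by linarith only [hk])
    calc |(∫ γ : EuclideanSpace ℝ (Fin m), f (app γ p) * ρ γ) - K| * q^(H0+δ)
        ≤ (Cst * Iρ + M1 * (Ct * B^(-(k:ℝ)))) * q^(H0+δ) :=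
          mul_le_mul_of_nonneg_right htotal hq2
      _ = (ε + A * q^(-κ3)) * (q^(-(H0+δ)) * q^(H0+δ)) * Iρ
          + M1 * Ct * (B^(-(k:ℝ)) * q^(H0+δ)) := by rw [hCstdef]; ring
      _ = (ε + A * q^(-κ3)) * Iρ + M1 * Ct * (B^(-(k:ℝ)) * q^(H0+δ)) := by
          rw [hqq, mul_one]
      _ ≤ (ε + A * q^(-κ3)) * Iρ + M1 * Ct * q^(-(1:ℝ)) :=
          add_le_add_right (mul_le_mul_of_nonneg_left hBk
            (mul_nonneg hM10.le hCt0.le)) _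
      _ ≤ ε * Iρ + (A * Iρ) * q^(-κ3) + (M1 * (Ct+1)) * q^(-(1:ℝ)) := by
          have h9 : (0:ℝ) ≤ q^(-(1:ℝ)) := Real.rpow_nonneg hq0.le _
          have h10 : M1 * Ct * q^(-(1:ℝ)) ≤ (M1 * (Ct+1)) * q^(-(1:ℝ)) :=
            mul_le_mul_of_nonneg_right
              (mul_le_mul_of_nonneg_left (by linarith only [hCt0]) hM10.le) h9
          have h11 : (ε + A * q^(-κ3)) * Iρ = ε * Iρ + (A * Iρ) * q^(-κ3) := by ring
          linarith only [h10, h11]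
  rw [Metric.tendsto_nhds]
  intro ε' hε'
  set ε : ℝ := min 1 (ε'/(4*(Iρ+1))) with hεdef
  have hεpos : 0 < ε := lt_min one_pos (by positivity)
  have hev1 := claim ε hεpos (min_le_left _ _)
  have hbase : ∀ u : ℝ, 0 < u →
      Tendsto (fun p : ℝ => |p| ^ (-u)) (cocompact ℝ) (nhds 0) := by
    intro u hu
    have h1 : Tendsto (fun x : ℝ => x ^ (-u)) atTop (nhds 0) := tendsto_rpow_neg_atTop hu
    have h2 := h1.comp (tendsto_norm_cocompact_atTop (E := ℝ))
    simpa [Function.comp_def, Real.norm_eq_abs] using h2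
  have hev2 : ∀ᶠ p in cocompact ℝ, (A * Iρ) * |p| ^ (-κ3) ≤ ε'/4 := by
    have h2 := ((hbase κ3 hκ30).const_mul (A * Iρ))
    rw [mul_zero] at h2
    exact h2.eventually_le_const (by positivity)
  have hev3 : ∀ᶠ p in cocompact ℝ, (M1 * (Ct + 1)) * |p| ^ (-(1:ℝ)) ≤ ε'/4 := by
    have h2 := ((hbase 1 one_pos).const_mul (M1 * (Ct + 1)))
    rw [mul_zero] at h2
    exact h2.eventually_le_const (by positivity)
  filter_upwards [hev1, hev2, hev3] with p h1 h2 h3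
  rw [Real.dist_eq, sub_zero]
  have hεI : ε * Iρ ≤ ε'/4 := by
    have hle : ε ≤ ε'/(4*(Iρ+1)) := min_le_right _ _
    calc ε * Iρ ≤ (ε'/(4*(Iρ+1))) * (Iρ+1) :=
          mul_le_mul hle (by linarith) hIρ0 (by positivity)
      _ = ε'/4 := by field_simp
  calc |((∫ γ : EuclideanSpace ℝ (Fin m), f (app γ p) * ρ γ) -
          C0 * |p| ^ (-H0)) * |p| ^ (H0 + δ)|
      ≤ ε * Iρ + (A * Iρ) * |p| ^ (-κ3) + (M1 * (Ct + 1)) * |p| ^ (-(1:ℝ)) := h1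
    _ ≤ ε'/4 + ε'/4 + ε'/4 := by linarith
    _ < ε' := by linarith
end
end

section
/- Let A > 1, let h and c be even functions on ℝ^d∖{0} homogeneous of degree 0, with c bounded on S^{d−1} and h(S^{d−1}) ⊂ [h0, h1] where h0 > 0. Let f be a measurable function on ℝ^d with f(ξ) = c(ξ)|ξ|^{−h(ξ)} for all |ξ| > A, and let ρ : ℝ^{d−1} → ℝ be rapidly decreasing. Then for every s > 0 and every m ∈ ℕ, ∫_{|γ| > |p|^s} |f(γ, p) − f(pθ0)| |ρ(γ)| dγ = O(|p|^{−h0−ms}) as |p| → ∞. -/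
open MeasureTheory Filter

noncomputable section

lemma coord_le_norm {n : ℕ} (x : EuclideanSpace ℝ (Fin n)) (i : Fin n) : |x i| ≤ ‖x‖ := by
  rw [EuclideanSpace.norm_eq, ← Real.sqrt_sq_eq_abs]
  apply Real.sqrt_le_sqrt
  have := Finset.single_le_sum (f := fun j => ‖x j‖ ^ 2)
    (fun j _ => sq_nonneg _) (Finset.mem_univ i)
  simpa [Real.norm_eq_abs, sq_abs] using this

lemma norm_app_zero {m : ℕ} (p : ℝ) : ‖app (0 : EuclideanSpace ℝ (Fin m)) p‖ = |p| := by
  have : app (0 : EuclideanSpace ℝ (Fin m)) p = EuclideanSpace.single (Fin.last m) p := by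
    ext i
    rw [EuclideanSpace.single_apply]
    refine Fin.lastCases ?_ (fun j => ?_) i
    · simp [app, Fin.snoc_last]
    · have hne : Fin.castSucc j ≠ Fin.last m := (Fin.castSucc_lt_last j).ne
      simp only [app, PiLp.toLp_apply, Fin.snoc_castSucc, hne, if_false]
      rfl
  rw [this, EuclideanSpace.norm_single, Real.norm_eq_abs]

open Asymptotics in
theorem statement14 (m : ℕ) (hm : 1 ≤ m) (A h₀ h₁ : ℝ) (hA : 1 < A) (hh₀ : 0 < h₀)
    (h c : EuclideanSpace ℝ (Fin (m + 1)) → ℝ)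
    (hheven : EvenFn h) (hceven : EvenFn c)
    (hhhom : Homog0 h) (hchom : Homog0 c)
    (hcbdd : ∃ Cb : ℝ, ∀ ξ : EuclideanSpace ℝ (Fin (m + 1)), ‖ξ‖ = 1 → |c ξ| ≤ Cb)
    (hhran : ∀ ξ : EuclideanSpace ℝ (Fin (m + 1)), ξ ≠ 0 →
      h ξ ∈ Set.Icc h₀ h₁)
    (f : EuclideanSpace ℝ (Fin (m + 1)) → ℝ) (hfmeas : Measurable f)
    (hf : ∀ ξ : EuclideanSpace ℝ (Fin (m + 1)), A < ‖ξ‖ →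
      f ξ = c ξ * ‖ξ‖ ^ (-h ξ))
    (ρ : EuclideanSpace ℝ (Fin m) → ℝ) (hρmeas : Measurable ρ)
    (hρ : RapidDecay ρ) :
    ∀ s : ℝ, 0 < s → ∀ k : ℕ,
      (fun p : ℝ =>
          ∫ γ in {γ : EuclideanSpace ℝ (Fin m) | |p| ^ s < ‖γ‖},
            |f (app γ p) - f (app 0 p)| * |ρ γ|)
        =O[cocompact ℝ] fun p : ℝ => |p| ^ (-h₀ - k * s) := by
  intro s hs k
  obtain ⟨Cb, hCb⟩ := hcbdd
  set Cb' := max Cb 0 with hCb'def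
  have hCb'0 : 0 ≤ Cb' := le_max_right _ _
  have hCb' : ∀ ξ : EuclideanSpace ℝ (Fin (m + 1)), ξ ≠ 0 → |c ξ| ≤ Cb' := by
    intro ξ hξ
    have hn : (0 : ℝ) < ‖ξ‖ := norm_pos_iff.2 hξ
    have h1 : ‖(‖ξ‖⁻¹ • ξ)‖ = 1 := by
      rw [norm_smul, norm_inv, norm_norm, inv_mul_cancel₀ hn.ne']
    have := hCb _ h1
    rw [hchom _ (inv_pos.2 hn) ξ hξ] at this
    exact this.trans (le_max_left _ _)
  have hfb : ∀ ξ : EuclideanSpace ℝ (Fin (m + 1)), A < ‖ξ‖ → |f ξ| ≤ Cb' * ‖ξ‖ ^ (-h₀) := by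
    intro ξ hξA
    have hξ0 : ξ ≠ 0 := by
      intro h0; rw [h0, norm_zero] at hξA; linarith
    have h1ξ : (1 : ℝ) ≤ ‖ξ‖ := by linarith
    rw [hf ξ hξA, abs_mul, abs_of_nonneg (Real.rpow_nonneg (norm_nonneg ξ) _)]
    have e1 : ‖ξ‖ ^ (-h ξ) ≤ ‖ξ‖ ^ (-h₀) :=
      Real.rpow_le_rpow_of_exponent_le h1ξ (neg_le_neg (hhran ξ hξ0).1)
    exact mul_le_mul (hCb' ξ hξ0) e1 (Real.rpow_nonneg (norm_nonneg ξ) _) hCb'0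
  obtain ⟨C, hCpos, hC⟩ := hρ (k + (m + 1))
  have hInt : Integrable (fun γ : EuclideanSpace ℝ (Fin m) => (1 + ‖γ‖) ^ (-(m + 1 : ℝ))) := by
    apply integrable_one_add_norm
    rw [finrank_euclideanSpace_fin]
    exact_mod_cast Nat.lt_succ_self m
  set I := ∫ γ : EuclideanSpace ℝ (Fin m), (1 + ‖γ‖) ^ (-(m + 1 : ℝ)) with hI
  have hInonneg : 0 ≤ I :=
    integral_nonneg fun γ => Real.rpow_nonneg (by positivity) _
  rw [Asymptotics.isBigO_iff]
  refine ⟨2 * Cb' * C * I, ?_⟩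
  have hev : ∀ᶠ p : ℝ in cocompact ℝ, max A 1 < ‖p‖ :=
    tendsto_norm_cocompact_atTop.eventually_gt_atTop _
  filter_upwards [hev] with p hp
  rw [Real.norm_eq_abs] at hp
  have hpA : A < |p| := (le_max_left _ _).trans_lt hp
  have hp1 : 1 < |p| := (le_max_right _ _).trans_lt hp
  have hp0 : 0 < |p| := by linarith
  set R := |p| ^ s with hRdef
  have hRpos : 0 < R := Real.rpow_pos_of_pos hp0 s
  set S : Set (EuclideanSpace ℝ (Fin m)) := {γ | R < ‖γ‖} with hSdef
  have hRk : (1 + R) ^ (-(k : ℝ)) ≤ |p| ^ (-(s * k)) := by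
    have h1 : (1 + R) ^ (-(k : ℝ)) ≤ R ^ (-(k : ℝ)) :=
      Real.rpow_le_rpow_of_nonpos hRpos (by linarith) (neg_nonpos.2 (Nat.cast_nonneg k))
    have h2 : R ^ (-(k : ℝ)) = |p| ^ (-(s * k)) := by
      rw [hRdef, ← Real.rpow_mul hp0.le]
      congr 1
      ring
    linarith [h1, h2.le]
  have key : ∀ γ ∈ S, |f (app γ p) - f (app 0 p)| * |ρ γ| ≤
      2 * Cb' * C * (|p| ^ (-h₀) * |p| ^ (-(s * k))) * (1 + ‖γ‖) ^ (-(m + 1 : ℝ)) := by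
    intro γ hγ
    have hγS : R < ‖γ‖ := hγ
    have hApn : A < ‖app γ p‖ := hpA.trans_le (abs_le_norm_app γ p)
    have hb1 : |f (app γ p)| ≤ Cb' * |p| ^ (-h₀) := by
      refine (hfb _ hApn).trans ?_
      have : ‖app γ p‖ ^ (-h₀) ≤ |p| ^ (-h₀) :=
        Real.rpow_le_rpow_of_nonpos hp0 (abs_le_norm_app γ p) (by linarith)
      exact mul_le_mul_of_nonneg_left this hCb'0
    have hb2 : |f (app 0 p)| ≤ Cb' * |p| ^ (-h₀) := by
      have : A < ‖app (0 : EuclideanSpace ℝ (Fin m)) p‖ := by rw [norm_app_zero]; exact hpA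
      refine (hfb _ this).trans ?_
      rw [norm_app_zero]
    have hdiff : |f (app γ p) - f (app 0 p)| ≤ 2 * Cb' * |p| ^ (-h₀) := by
      calc |f (app γ p) - f (app 0 p)| ≤ |f (app γ p)| + |f (app 0 p)| := abs_sub _ _
        _ ≤ Cb' * |p| ^ (-h₀) + Cb' * |p| ^ (-h₀) := add_le_add hb1 hb2
        _ = 2 * Cb' * |p| ^ (-h₀) := by ring
    have hρb : |ρ γ| ≤ C * (|p| ^ (-(s * k)) * (1 + ‖γ‖) ^ (-(m + 1 : ℝ))) := by
      have h0γ : (0 : ℝ) < 1 + ‖γ‖ := by positivity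
      have e : ((k + (m + 1) : ℕ) : ℝ) = (k : ℝ) + (m + 1 : ℝ) := by push_cast; ring
      have := hC γ
      rw [e, neg_add, Real.rpow_add h0γ] at this
      refine this.trans ?_
      have h1 : (1 + ‖γ‖) ^ (-(k : ℝ)) ≤ |p| ^ (-(s * k)) := by
        refine le_trans ?_ hRk
        exact Real.rpow_le_rpow_of_nonpos (by linarith) (by linarith) (neg_nonpos.2 (Nat.cast_nonneg k))
      have h2 : (0 : ℝ) ≤ (1 + ‖γ‖) ^ (-(m + 1 : ℝ)) := Real.rpow_nonneg h0γ.le _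
      rw [mul_assoc] at *
      exact mul_le_mul_of_nonneg_left (mul_le_mul_of_nonneg_right h1 h2) hCpos.le
    calc |f (app γ p) - f (app 0 p)| * |ρ γ|
        ≤ (2 * Cb' * |p| ^ (-h₀)) * (C * (|p| ^ (-(s * k)) * (1 + ‖γ‖) ^ (-(m + 1 : ℝ)))) :=
          mul_le_mul hdiff hρb (abs_nonneg _) (by positivity)
      _ = 2 * Cb' * C * (|p| ^ (-h₀) * |p| ^ (-(s * k))) * (1 + ‖γ‖) ^ (-(m + 1 : ℝ)) := by ring
  have hSmeas : MeasurableSet S := (isOpen_lt continuous_const continuous_norm).measurableSet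
  set cst : ℝ := 2 * Cb' * C * (|p| ^ (-h₀) * |p| ^ (-(s * k))) with hcst
  have hcst0 : 0 ≤ cst := by positivity
  have step1 : (∫ γ in S, |f (app γ p) - f (app 0 p)| * |ρ γ|) ≤ cst * I := by
    have hintS : Integrable
        (fun γ : EuclideanSpace ℝ (Fin m) => cst * (1 + ‖γ‖) ^ (-(m + 1 : ℝ)))
        (volume.restrict S) := (hInt.const_mul _).restrict
    calc (∫ γ in S, |f (app γ p) - f (app 0 p)| * |ρ γ|)
        ≤ ∫ γ in S, cst * (1 + ‖γ‖) ^ (-(m + 1 : ℝ)) := by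
          refine integral_mono_of_nonneg ?_ hintS ?_
          · exact Filter.Eventually.of_forall fun γ => mul_nonneg (abs_nonneg _) (abs_nonneg _)
          · exact (ae_restrict_iff' hSmeas).2 (Filter.Eventually.of_forall key)
      _ = cst * ∫ γ in S, (1 + ‖γ‖) ^ (-(m + 1 : ℝ)) := integral_const_mul _ _
      _ ≤ cst * I := by
          refine mul_le_mul_of_nonneg_left ?_ hcst0
          exact setIntegral_le_integral hInt
            (Filter.Eventually.of_forall fun γ => Real.rpow_nonneg (by positivity) _)
  have lhs_nonneg : 0 ≤ ∫ γ in S, |f (app γ p) - f (app 0 p)| * |ρ γ| :=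
    integral_nonneg fun γ => mul_nonneg (abs_nonneg _) (abs_nonneg _)
  rw [Real.norm_eq_abs, abs_of_nonneg lhs_nonneg, Real.norm_eq_abs,
    abs_of_nonneg (Real.rpow_nonneg hp0.le _)]
  have hexp : cst * I = 2 * Cb' * C * I * |p| ^ (-h₀ - k * s) := by
    rw [hcst, ← Real.rpow_add hp0]
    ring_nf
  calc (∫ γ in S, |f (app γ p) - f (app 0 p)| * |ρ γ|) ≤ cst * I := step1
    _ = 2 * Cb' * C * I * |p| ^ (-h₀ - k * s) := hexp
end
end
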